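/- arXiv:2410.06683 — 3 statements merged into one kernel-verified Lean document; each statement's English description precedes it below -/
import Mathlib

section
/- For every integer length bound k ≥ 3 and every (uniform or non-uniform) length function λ, there exists a truthful (k,λ)-BE mechanism that admits approximation ratio k (witnessed by the Greedy mechanism that adds pairwise-disjoint trading cycles in non-decreasing order of length). -/
/-!
Barter exchange (BE) framework, following Emek–Shpiro,
"Barter Exchange with Bounded Trading Cycles".
-/

open Finset

namespace BarterExchange

noncomputable section

/-- The length of the trading cycle of `π` containing agent `i`
(equals `0` when `i` does not partake in `π`). -/
def cycLen {n : ℕ} (π : Equiv.Perm (Fin n)) (i : Fin n) : ℕ :=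
  (π.cycleOf i).support.card

/-- The utility of agent `i` from the exchange `π` under the length function `lam`:
`lam ℓ` if `i` partakes in a trading cycle of length `ℓ`, and `0` otherwise. -/
def utility {n : ℕ} (lam : ℕ → ℝ) (π : Equiv.Perm (Fin n)) (i : Fin n) : ℝ :=
  if π i ≠ i then lam (cycLen π i) else 0

/-- Social welfare of an exchange: the sum of the agents' utilities,
which equals `∑_{trading cycles c} len(c)·λ(len(c))`. -/
def SW {n : ℕ} (lam : ℕ → ℝ) (π : Equiv.Perm (Fin n)) : ℝ :=
  ∑ i, utility lam π i

/-- A wish list vector: `W i ⊆ [n] ∖ {i}`. -/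
def IsWishList {n : ℕ} (W : Fin n → Finset (Fin n)) : Prop :=
  ∀ i, i ∉ W i

/-- `π ∈ Π_W^k`: every partaking agent is sent to an agent on her wish list and
all trading cycles have length at most `k`. -/
def Feasible (k : ℕ) {n : ℕ} (W : Fin n → Finset (Fin n)) (π : Equiv.Perm (Fin n)) : Prop :=
  ∀ i : Fin n, π i ≠ i → π i ∈ W i ∧ cycLen π i ≤ k

/-- A length function for length bound `k`: a non-increasing map `{2,…,k} → (0,1]`. -/
def IsLengthFunction (k : ℕ) (lam : ℕ → ℝ) : Prop :=
  (∀ ℓ : ℕ, 2 ≤ ℓ → ℓ ≤ k → 0 < lam ℓ ∧ lam ℓ ≤ 1) ∧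
    ∀ ℓ ℓ' : ℕ, 2 ≤ ℓ → ℓ ≤ ℓ' → ℓ' ≤ k → lam ℓ' ≤ lam ℓ

/-- A mechanism assigns an exchange to every number of agents and wish list vector. -/
abbrev Mechanism : Type :=
  (n : ℕ) → (Fin n → Finset (Fin n)) → Equiv.Perm (Fin n)

/-- A `(k,λ)`-BE mechanism outputs, on every wish list vector `W`,
an exchange in `Π_W^k` (individual rationality). -/
def IsMechanism (k : ℕ) (f : Mechanism) : Prop :=
  ∀ (n : ℕ) (W : Fin n → Finset (Fin n)), IsWishList W → Feasible k W (f n W)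

/-- Truthfulness: under the subset wish list assumption, no agent can gain by
reporting a strict subset of her true wish list. -/
def Truthful (k : ℕ) (lam : ℕ → ℝ) (f : Mechanism) : Prop :=
  ∀ (n : ℕ) (Wstar W : Fin n → Finset (Fin n)), IsWishList Wstar →
    (∀ j, W j ⊆ Wstar j) → ∀ i : Fin n,
      utility lam (f n W) i ≤ utility lam (f n (Function.update W i (Wstar i))) i

/-- `f` admits approximation ratio `r ≥ 1`: on every wish list vector the social welfare of
`f`'s outcome is at least `1/r` times that of any feasible exchange. -/
def ApproxRatio (k : ℕ) (lam : ℕ → ℝ) (f : Mechanism) (r : ℝ) : Prop :=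
  1 ≤ r ∧
    ∀ (n : ℕ) (Wstar : Fin n → Finset (Fin n)), IsWishList Wstar →
      ∀ π : Equiv.Perm (Fin n), Feasible k Wstar π →
        SW lam (f n Wstar) ≥ (1 / r) * SW lam π

namespace Greedy


open List Equiv Equiv.Perm

/-- All duplicate-free lists of length `ℓ` over `Fin n`. -/
def cyclesOfLen (n ℓ : ℕ) : List (List (Fin n)) :=
  ((List.finRange n).sublistsLen ℓ).flatMap List.permutations

lemma mem_cyclesOfLen {n ℓ : ℕ} {c : List (Fin n)} :
    c ∈ cyclesOfLen n ℓ ↔ c.Nodup ∧ c.length = ℓ := by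
  constructor
  · intro h
    obtain ⟨s, hs, hc⟩ := List.mem_flatMap.1 h
    obtain ⟨hsub, hlen⟩ := List.mem_sublistsLen.1 hs
    have hperm : c ~ s := List.mem_permutations.1 hc
    exact ⟨hperm.nodup_iff.2 (hsub.nodup (List.nodup_finRange n)),
      by rw [hperm.length_eq, hlen]⟩
  · rintro ⟨hnd, rfl⟩
    have hsub : c <+~ List.finRange n :=
      List.subperm_of_subset hnd (fun x _ => List.mem_finRange x)
    obtain ⟨s, hs1, hs2⟩ := hsub
    exact List.mem_flatMap.2 ⟨s, List.mem_sublistsLen.2 ⟨hs2, hs1.length_eq⟩,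
      List.mem_permutations.2 hs1.symm⟩

/-- The fixed list of all candidate trading cycles, in nondecreasing order of length. -/
def allCycles (k n : ℕ) : List (List (Fin n)) :=
  (List.range' 2 (k - 1)).flatMap (cyclesOfLen n)

lemma mem_allCycles {k n : ℕ} (hk : 2 ≤ k) {c : List (Fin n)} :
    c ∈ allCycles k n ↔ c.Nodup ∧ 2 ≤ c.length ∧ c.length ≤ k := by
  simp only [allCycles, List.mem_flatMap, List.mem_range', mem_cyclesOfLen]
  constructor
  · rintro ⟨ℓ, ⟨i, hi, rfl⟩, hnd, hlen⟩
    exact ⟨hnd, by omega, by omega⟩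
  · rintro ⟨hnd, h2, hk'⟩
    exact ⟨c.length, ⟨c.length - 2, by omega, by omega⟩, hnd, rfl⟩

lemma sorted_le_range' : ∀ (m s : ℕ), (List.range' s m).Pairwise (· ≤ ·)
  | 0, s => by simp
  | m + 1, s => by
    rw [List.range'_succ]
    refine List.pairwise_cons.2 ⟨fun y hy => ?_, sorted_le_range' m (s + 1)⟩
    obtain ⟨i, _, rfl⟩ := List.mem_range'.1 hy
    omega

lemma sorted_flatMap_lengths {g : ℕ → List ℕ} (hg : ∀ ℓ x, x ∈ g ℓ → x = ℓ) :
    ∀ L : List ℕ, L.Pairwise (· ≤ ·) → (L.flatMap g).Pairwise (· ≤ ·)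
  | [], _ => by simp
  | a :: t, h => by
    rw [List.flatMap_cons]
    refine List.pairwise_append.2 ⟨?_, sorted_flatMap_lengths hg t h.of_cons, ?_⟩
    · exact List.pairwise_of_forall_mem_list fun x hx y hy => by
        rw [hg a x hx, hg a y hy]
    · intro x hx y hy
      obtain ⟨b, hb, hyb⟩ := List.mem_flatMap.1 hy
      rw [hg a x hx, hg b y hyb]
      exact (List.pairwise_cons.1 h).1 b hb

lemma sorted_allCycles (k n : ℕ) :
    ((allCycles k n).map List.length).Pairwise (· ≤ ·) := by
  rw [allCycles, List.map_flatMap]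
  exact sorted_flatMap_lengths
    (fun ℓ x hx => by
      obtain ⟨c, hc, rfl⟩ := List.mem_map.1 hx
      exact (mem_cyclesOfLen.1 hc).2)
    _ (sorted_le_range' _ _)



open List Equiv Equiv.Perm

variable {n : ℕ}

/-- `c` is disjoint from all lists already in `acc`. -/
def Free (acc : List (List (Fin n))) (c : List (Fin n)) : Prop :=
  ∀ a ∈ acc, ∀ x ∈ c, x ∉ a

open Classical in
/-- One greedy step: add `c` if it is valid and disjoint from what was chosen so far. -/
def step (v : List (Fin n) → Prop) (acc : List (List (Fin n))) (c : List (Fin n)) :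
    List (List (Fin n)) :=
  if v c ∧ Free acc c then acc ++ [c] else acc

/-- The greedy run over the candidate list `L`, starting from `acc`. -/
def run (v : List (Fin n) → Prop) (acc L : List (List (Fin n))) : List (List (Fin n)) :=
  L.foldl (step v) acc

lemma run_nil (v : List (Fin n) → Prop) (acc) : run v acc [] = acc := rfl

lemma run_cons (v : List (Fin n) → Prop) (acc c L) :
    run v acc (c :: L) = run v (step v acc c) L := rfl

lemma mem_step_of_mem {v : List (Fin n) → Prop} {acc c d} (h : d ∈ acc) :
    d ∈ step v acc c := by
  unfold step; split <;> simp [h]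

lemma subset_run (v : List (Fin n) → Prop) :
    ∀ (L acc : List (List (Fin n))), ∀ d ∈ acc, d ∈ run v acc L
  | [], acc => fun d hd => hd
  | c :: L, acc => fun d hd => subset_run v L _ d (mem_step_of_mem hd)

lemma mem_run_source (v : List (Fin n) → Prop) :
    ∀ (L acc : List (List (Fin n))), ∀ d ∈ run v acc L, d ∈ acc ∨ (d ∈ L ∧ v d)
  | [], acc => fun d hd => Or.inl hd
  | c :: L, acc => fun d hd => by
    rcases mem_run_source v L (step v acc c) d hd with h | h
    · unfold step at h
      split at h
      · rcases List.mem_append.1 h with h' | h'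
        · exact Or.inl h'
        · rename_i hcond
          simp only [List.mem_singleton] at h'
          subst h'
          exact Or.inr ⟨List.mem_cons_self, hcond.1⟩
      · exact Or.inl h
    · exact Or.inr ⟨List.mem_cons_of_mem _ h.1, h.2⟩

/-- Pairwise disjointness is preserved by the greedy run. -/
lemma pairwise_run (v : List (Fin n) → Prop) :
    ∀ (L acc : List (List (Fin n))),
      acc.Pairwise (fun a b => ∀ x ∈ b, x ∉ a) →
      (run v acc L).Pairwise (fun a b => ∀ x ∈ b, x ∉ a)
  | [], acc => fun h => h
  | c :: L, acc => fun h => by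
    refine pairwise_run v L (step v acc c) ?_
    unfold step
    split
    · rename_i hcond
      refine List.pairwise_append.2 ⟨h, List.pairwise_singleton _ _, ?_⟩
      intro a ha b hb
      simp only [List.mem_singleton] at hb
      subst hb
      exact hcond.2 a ha
    · exact h

/-- Maximality with length control: a valid candidate is either chosen, or blocked by
a chosen cycle of smaller or equal length. -/
lemma run_blocking (v : List (Fin n) → Prop) {c : List (Fin n)} (hv : v c) :
    ∀ (L acc : List (List (Fin n))),
      ((L.map List.length).Pairwise (· ≤ ·)) → c ∈ L →
      (∀ a ∈ acc, a.length ≤ c.length) →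
      c ∈ run v acc L ∨
        ∃ a ∈ run v acc L, a.length ≤ c.length ∧ ∃ x, x ∈ c ∧ x ∈ a
  | [], acc => fun _ hc _ => absurd hc List.not_mem_nil
  | d :: L, acc => fun hsort hc hacc => by
    rcases List.mem_cons.1 hc with rfl | hc
    · -- c is the head
      rw [run_cons]
      unfold step
      split
      · exact Or.inl (subset_run v L _ c (by simp))
      · rename_i hcond
        rw [not_and] at hcond
        have hfree := hcond hv
        unfold Free at hfree
        push_neg at hfree
        obtain ⟨a, ha, x, hx, hxa⟩ := hfree
        exact Or.inr ⟨a, subset_run v L _ a ha, hacc a ha, x, hx, hxa⟩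
    · -- c is in the tail
      rw [run_cons]
      have hdlen : d.length ≤ c.length := by
        have := (List.pairwise_cons.1 hsort).1 c.length
          (List.mem_map.2 ⟨c, hc, rfl⟩)
        exact this
      refine run_blocking v hv L (step v acc d) ((List.pairwise_cons.1 hsort).2) hc ?_
      intro a ha
      unfold step at ha
      split at ha
      · rcases List.mem_append.1 ha with h' | h'
        · exact hacc a h'
        · simp only [List.mem_singleton] at h'; subst h'; exact hdlen
      · exact hacc a ha

/-- The key truthfulness property of the greedy run. -/
lemma run_truthful (v v' : List (Fin n) → Prop) (i : Fin n)
    (hmono : ∀ c, v c → v' c) (hagree : ∀ c, i ∉ c → (v c ↔ v' c)) :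
    ∀ (L acc : List (List (Fin n))), ((L.map List.length).Pairwise (· ≤ ·)) →
      run v acc L = run v' acc L ∨
        ∃ c' ∈ run v' acc L, i ∈ c' ∧
          ∀ c ∈ run v acc L, i ∈ c → c'.length ≤ c.length
  | [], acc => fun _ => Or.inl rfl
  | d :: L, acc => fun hsort => by
    classical
    rw [run_cons, run_cons]
    by_cases hcond : v d ∧ Free acc d
    · have hcond' : v' d ∧ Free acc d := ⟨hmono d hcond.1, hcond.2⟩
      have hstep : step v acc d = step v' acc d := by
        unfold step; rw [if_pos hcond, if_pos hcond']
      rw [hstep]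
      exact run_truthful v v' i hmono hagree L (step v' acc d)
        ((List.pairwise_cons.1 hsort).2)
    · by_cases hcond' : v' d ∧ Free acc d
      · -- divergence: only the truthful run takes d
        have hid : i ∈ d := by
          by_contra hid
          exact hcond ⟨(hagree d hid).2 hcond'.1, hcond'.2⟩
        have hstep : step v acc d = acc := by unfold step; rw [if_neg hcond]
        have hstep' : step v' acc d = acc ++ [d] := by unfold step; rw [if_pos hcond']
        rw [hstep, hstep']
        refine Or.inr ⟨d, subset_run v' L _ d (by simp), hid, ?_⟩
        intro c hcmem hic
        rcases mem_run_source v L acc c hcmem with hc | hc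
        · exact absurd hic (hcond'.2 c hc i hid)
        · have := (List.pairwise_cons.1 hsort).1 c.length
            (List.mem_map.2 ⟨c, hc.1, rfl⟩)
          exact this
      · have hstep : step v acc d = step v' acc d := by
          unfold step; rw [if_neg hcond, if_neg hcond']
        rw [hstep]
        exact run_truthful v v' i hmono hagree L (step v' acc d)
          ((List.pairwise_cons.1 hsort).2)



open List Equiv Equiv.Perm

variable {n : ℕ}

lemma prod_apply_of_not_mem {x : Fin n} :
    ∀ {R : List (List (Fin n))}, (∀ c ∈ R, x ∉ c) →
      ((R.map List.formPerm).prod) x = x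
  | [], _ => rfl
  | a :: t, h => by
    rw [List.map_cons, List.prod_cons, Equiv.Perm.mul_apply,
      prod_apply_of_not_mem (fun c hc => h c (List.mem_cons_of_mem _ hc)),
      List.formPerm_apply_of_notMem (h a (List.mem_cons_self))]

lemma prod_apply_of_mem {x : Fin n} :
    ∀ {R : List (List (Fin n))} {c : List (Fin n)},
      R.Pairwise (fun a b => ∀ y ∈ b, y ∉ a) → c ∈ R → x ∈ c →
      ((R.map List.formPerm).prod) x = c.formPerm x
  | [], c => fun _ hc _ => absurd hc List.not_mem_nil
  | a :: t, c => fun hpw hc hx => by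
    obtain ⟨h1, h2⟩ := List.pairwise_cons.1 hpw
    rw [List.map_cons, List.prod_cons, Equiv.Perm.mul_apply]
    rcases List.mem_cons.1 hc with rfl | hc
    · rw [prod_apply_of_not_mem (fun b hb hxb => h1 b hb x hxb hx)]
    · rw [prod_apply_of_mem h2 hc hx,
        List.formPerm_apply_of_notMem (h1 c hc _ (List.formPerm_apply_mem_of_mem hx))]

lemma disjoint_formPerm_of {a b : List (Fin n)} (hab : ∀ y ∈ b, y ∉ a) :
    Equiv.Perm.Disjoint a.formPerm b.formPerm := by
  intro x
  by_cases hx : x ∈ a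
  · exact Or.inr (List.formPerm_apply_of_notMem (fun hxb => hab x hxb hx))
  · exact Or.inl (List.formPerm_apply_of_notMem hx)

lemma cycleOf_prod {x : Fin n} :
    ∀ {R : List (List (Fin n))} {c : List (Fin n)},
      R.Pairwise (fun a b => ∀ y ∈ b, y ∉ a) → c ∈ R → x ∈ c →
      ((R.map List.formPerm).prod).cycleOf x = c.formPerm.cycleOf x
  | [], c => fun _ hc _ => absurd hc List.not_mem_nil
  | a :: t, c => fun hpw hc hx => by
    obtain ⟨h1, h2⟩ := List.pairwise_cons.1 hpw
    have hd : Equiv.Perm.Disjoint a.formPerm ((t.map List.formPerm).prod) := by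
      refine Equiv.Perm.disjoint_prod_right _ ?_
      intro g hg
      obtain ⟨b, hb, rfl⟩ := List.mem_map.1 hg
      exact disjoint_formPerm_of (h1 b hb)
    rw [List.map_cons, List.prod_cons]
    rcases List.mem_cons.1 hc with rfl | hc
    · have hfix : ((t.map List.formPerm).prod) x = x :=
        prod_apply_of_not_mem (fun b hb hxb => h1 b hb x hxb hx)
      rw [Equiv.Perm.cycleOf_mul_of_apply_right_eq_self hd.commute x hfix]
    · have hfix : a.formPerm x = x :=
        List.formPerm_apply_of_notMem (h1 c hc x hx)
      rw [hd.commute.eq,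
        Equiv.Perm.cycleOf_mul_of_apply_right_eq_self hd.symm.commute x hfix]
      exact cycleOf_prod h2 hc hx

lemma formPerm_support_eq {c : List (Fin n)} (hnd : c.Nodup) (h2 : 2 ≤ c.length) :
    c.formPerm.support = c.toFinset := by
  refine List.support_formPerm_of_nodup c hnd ?_
  intro y hy
  rw [hy] at h2
  simp at h2

lemma formPerm_apply_ne {c : List (Fin n)} (hnd : c.Nodup) (h2 : 2 ≤ c.length)
    {x : Fin n} (hx : x ∈ c) : c.formPerm x ≠ x := by
  have : x ∈ c.formPerm.support := by
    rw [formPerm_support_eq hnd h2]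
    exact List.mem_toFinset.2 hx
  exact Equiv.Perm.mem_support.1 this

lemma cycLen_prod {x : Fin n} {R : List (List (Fin n))} {c : List (Fin n)}
    (hpw : R.Pairwise (fun a b => ∀ y ∈ b, y ∉ a))
    (hnd : c.Nodup) (h2 : 2 ≤ c.length)
    (hc : c ∈ R) (hx : x ∈ c) :
    cycLen ((R.map List.formPerm).prod) x = c.length := by
  rw [cycLen, cycleOf_prod hpw hc hx,
    (List.isCycle_formPerm hnd h2).cycleOf_eq (formPerm_apply_ne hnd h2 hx),
    formPerm_support_eq hnd h2, List.toFinset_card_of_nodup hnd]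


end Greedy
namespace Greedy
open List Equiv Equiv.Perm

/-- Validity of a candidate cycle w.r.t. the wish lists `W`. -/
def valid {n : ℕ} (W : Fin n → Finset (Fin n)) (c : List (Fin n)) : Prop :=
  ∀ x ∈ c, c.formPerm x ∈ W x

/-- The list of trading cycles chosen by the Greedy mechanism. -/
def chosen (k : ℕ) {n : ℕ} (W : Fin n → Finset (Fin n)) : List (List (Fin n)) :=
  run (valid W) [] (allCycles k n)

/-- The exchange output by the Greedy mechanism. -/
def outPerm (k : ℕ) {n : ℕ} (W : Fin n → Finset (Fin n)) : Equiv.Perm (Fin n) :=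
  ((chosen k W).map List.formPerm).prod

variable {k n : ℕ} {W : Fin n → Finset (Fin n)}

lemma chosen_spec (hk : 2 ≤ k) {c : List (Fin n)} (hc : c ∈ chosen k W) :
    c.Nodup ∧ 2 ≤ c.length ∧ c.length ≤ k ∧ valid W c := by
  rcases mem_run_source _ _ _ _ hc with h | h
  · exact absurd h List.not_mem_nil
  · obtain ⟨hnd, h2, hk'⟩ := (mem_allCycles hk).1 h.1
    exact ⟨hnd, h2, hk', h.2⟩

lemma chosen_pairwise : (chosen k W).Pairwise (fun a b => ∀ x ∈ b, x ∉ a) :=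
  pairwise_run _ _ _ (List.Pairwise.nil)

lemma outPerm_apply_of_mem (hk : 2 ≤ k) {c : List (Fin n)} {x : Fin n}
    (hc : c ∈ chosen k W) (hx : x ∈ c) :
    outPerm k W x = c.formPerm x :=
  prod_apply_of_mem chosen_pairwise hc hx

lemma outPerm_apply_of_not_mem {x : Fin n}
    (h : ∀ c ∈ chosen k W, x ∉ c) : outPerm k W x = x :=
  prod_apply_of_not_mem h

lemma cycLen_outPerm (hk : 2 ≤ k) {c : List (Fin n)} {x : Fin n}
    (hc : c ∈ chosen k W) (hx : x ∈ c) :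
    cycLen (outPerm k W) x = c.length := by
  obtain ⟨hnd, h2, -, -⟩ := chosen_spec hk hc
  exact cycLen_prod chosen_pairwise hnd h2 hc hx

lemma exists_mem_of_moved (hk : 2 ≤ k) {x : Fin n} (h : outPerm k W x ≠ x) :
    ∃ c ∈ chosen k W, x ∈ c := by
  by_contra hcon
  push_neg at hcon
  exact h (outPerm_apply_of_not_mem hcon)

lemma utility_outPerm_of_mem (hk : 2 ≤ k) (lam : ℕ → ℝ) {c : List (Fin n)} {x : Fin n}
    (hc : c ∈ chosen k W) (hx : x ∈ c) :
    utility lam (outPerm k W) x = lam c.length := by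
  obtain ⟨hnd, h2, -, -⟩ := chosen_spec hk hc
  rw [utility, if_pos, cycLen_outPerm hk hc hx]
  rw [outPerm_apply_of_mem hk hc hx]
  exact formPerm_apply_ne hnd h2 hx

lemma utility_outPerm_of_not_mem (lam : ℕ → ℝ) {x : Fin n}
    (h : ∀ c ∈ chosen k W, x ∉ c) :
    utility lam (outPerm k W) x = 0 := by
  rw [utility, if_neg]
  simp only [ne_eq, not_not]
  exact outPerm_apply_of_not_mem h

/-- Greedy is individually rational / feasible. -/
lemma outPerm_feasible (hk : 2 ≤ k) : Feasible k W (outPerm k W) := by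
  intro i hi
  obtain ⟨c, hc, hic⟩ := exists_mem_of_moved hk hi
  obtain ⟨hnd, h2, hlen, hval⟩ := chosen_spec hk hc
  constructor
  · rw [outPerm_apply_of_mem hk hc hic]
    exact hval i hic
  · rw [cycLen_outPerm hk hc hic]
    exact hlen

/-- Greedy is truthful. -/
lemma outPerm_truthful (hk : 2 ≤ k) (lam : ℕ → ℝ) (hlam : IsLengthFunction k lam)
    (Wstar W : Fin n → Finset (Fin n))
    (hsub : ∀ j, W j ⊆ Wstar j) (i : Fin n) :
    utility lam (outPerm k W) i ≤
      utility lam (outPerm k (Function.update W i (Wstar i))) i := by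
  classical
  set W' := Function.update W i (Wstar i) with hW'
  have hmono : ∀ c, valid W c → valid W' c := by
    intro c hvc x hx
    by_cases hxi : x = i
    · subst hxi
      rw [hW', Function.update_self]
      exact hsub x (hvc x hx)
    · rw [hW', Function.update_of_ne hxi]
      exact hvc x hx
  have hagree : ∀ c, i ∉ c → (valid W c ↔ valid W' c) := by
    intro c hic
    have hWx : ∀ x ∈ c, W' x = W x := by
      intro x hx
      have : x ≠ i := fun h => hic (h ▸ hx)
      rw [hW', Function.update_of_ne this]
    constructor
    · intro hvc x hx; rw [hWx x hx]; exact hvc x hx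
    · intro hvc x hx; rw [← hWx x hx]; exact hvc x hx
  rcases run_truthful (valid W) (valid W') i hmono hagree (allCycles k n) []
      (sorted_allCycles k n) with heq | ⟨c', hc', hic', hall⟩
  · have : chosen k W = chosen k W' := heq
    rw [outPerm, outPerm, this]
  · obtain ⟨hnd', h2', hk'', -⟩ := chosen_spec (W := W') hk hc'
    have hu' : utility lam (outPerm k W') i = lam c'.length :=
      utility_outPerm_of_mem hk lam hc' hic'
    by_cases hm : ∃ c ∈ chosen k W, i ∈ c
    · obtain ⟨c, hc, hic⟩ := hm
      obtain ⟨hnd, h2, hkc, -⟩ := chosen_spec hk hc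
      rw [hu', utility_outPerm_of_mem hk lam hc hic]
      exact hlam.2 c'.length c.length h2' (hall c hc hic) hkc
    · push_neg at hm
      rw [hu', utility_outPerm_of_not_mem lam hm]
      exact le_of_lt (hlam.1 c'.length h2' hk'').1

end Greedy

namespace Greedy
open List Equiv Equiv.Perm

variable {k n : ℕ} {W : Fin n → Finset (Fin n)}

lemma utility_outPerm_nonneg (hk : 2 ≤ k) (lam : ℕ → ℝ) (hlam : IsLengthFunction k lam)
    (x : Fin n) : 0 ≤ utility lam (outPerm k W) x := by
  by_cases hx : outPerm k W x ≠ x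
  · obtain ⟨c, hc, hxc⟩ := exists_mem_of_moved hk hx
    obtain ⟨-, h2, hkc, -⟩ := chosen_spec hk hc
    rw [utility_outPerm_of_mem hk lam hc hxc]
    exact le_of_lt (hlam.1 c.length h2 hkc).1
  · rw [utility, if_neg hx]

/-- The social welfare of the greedy outcome is at least `∑_{c chosen} len(c)·λ(len c)`. -/
lemma SW_outPerm_ge (hk : 2 ≤ k) (lam : ℕ → ℝ) (hlam : IsLengthFunction k lam) :
    SW lam (outPerm k W) ≥
      ∑ c ∈ (chosen k W).toFinset, (c.length : ℝ) * lam c.length := by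
  classical
  set T : Finset (List (Fin n)) := (chosen k W).toFinset with hT
  have hdisj : Set.PairwiseDisjoint (↑T) (fun c : List (Fin n) => c.toFinset) := by
    intro a ha b hb hab
    have ha' : a ∈ chosen k W := List.mem_toFinset.1 ha
    have hb' : b ∈ chosen k W := List.mem_toFinset.1 hb
    have hsym : (List.Pairwise (fun a b : List (Fin n) =>
        Disjoint a.toFinset b.toFinset) (chosen k W)) := by
      refine List.Pairwise.imp ?_ (chosen_pairwise (k := k) (W := W))
      intro a b h
      rw [Finset.disjoint_right]
      intro x hx
      simp only [List.mem_toFinset] at hx ⊢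
      intro hxa
      exact h x (by simpa using hx) (by simpa using hxa)
    have := (letI : Std.Symm (fun a b : List (Fin n) => Disjoint a.toFinset b.toFinset) := ⟨fun x y h => h.symm⟩; List.Pairwise.forall hsym ha' hb' hab)
    exact this
  have hsplit : ∑ i ∈ T.biUnion (fun c => c.toFinset), utility lam (outPerm k W) i
      = ∑ c ∈ T, (c.length : ℝ) * lam c.length := by
    rw [Finset.sum_biUnion hdisj]
    refine Finset.sum_congr rfl ?_
    intro c hc
    have hc' : c ∈ chosen k W := List.mem_toFinset.1 hc
    obtain ⟨hnd, -, -, -⟩ := chosen_spec hk hc'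
    have : ∀ i ∈ c.toFinset, utility lam (outPerm k W) i = lam c.length := by
      intro i hi
      exact utility_outPerm_of_mem hk lam hc' (List.mem_toFinset.1 hi)
    rw [Finset.sum_congr rfl this, Finset.sum_const, List.toFinset_card_of_nodup hnd,
      nsmul_eq_mul]
  rw [SW, ← hsplit]
  refine Finset.sum_le_sum_of_subset_of_nonneg (Finset.subset_univ _) ?_
  intro i _ _
  exact utility_outPerm_nonneg hk lam hlam i

/-- The k-approximation property of Greedy. -/
lemma SW_le_k_mul (hk : 2 ≤ k) (lam : ℕ → ℝ) (hlam : IsLengthFunction k lam)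
    (π : Equiv.Perm (Fin n)) (hfeas : Feasible k W π) :
    SW lam π ≤ (k : ℝ) *
      ∑ c ∈ (chosen k W).toFinset, (c.length : ℝ) * lam c.length := by
  classical
  set T : Finset (List (Fin n)) := (chosen k W).toFinset with hT
  set P : Finset (Fin n) := Finset.univ.filter (fun i => π i ≠ i) with hP
  have hSWπ : SW lam π = ∑ i ∈ P, lam (cycLen π i) := by
    rw [SW, hP, Finset.sum_filter]
    rfl
  -- the charging map
  have hmain : ∀ i : Fin n, ∃ c : List (Fin n), i ∈ P →
      c ∈ T ∧ 2 ≤ c.length ∧ c.length ≤ cycLen π i ∧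
        ∃ x, x ∈ c ∧ x ∈ (π.cycleOf i).support := by
    intro i
    by_cases hi : i ∈ P
    swap
    · exact ⟨[], fun h => absurd h hi⟩
    have hπi : π i ≠ i := by
      have := Finset.mem_filter.1 hi
      exact this.2
    have hisup : i ∈ π.support := Equiv.Perm.mem_support.2 hπi
    set l : List (Fin n) := π.toList i with hl
    have hnd : l.Nodup := Equiv.Perm.nodup_toList π i
    have hlen : l.length = cycLen π i := Equiv.Perm.length_toList π i
    have h2 : 2 ≤ l.length :=
      Equiv.Perm.two_le_length_toList_iff_mem_support.2 hisup
    have hlk : l.length ≤ k := by rw [hlen]; exact (hfeas i hπi).2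
    have hmeml : ∀ x ∈ l, Equiv.Perm.SameCycle π i x := by
      intro x hx
      exact (Equiv.Perm.mem_toList_iff.1 hx).1
    have hmoved : ∀ x ∈ l, π x ≠ x := by
      intro x hx
      intro hfix
      exact hπi (((hmeml x hx).apply_eq_self_iff).2 hfix)
    have hval : valid W l := by
      intro x hx
      have hform : l.formPerm = π.cycleOf i := Equiv.Perm.formPerm_toList π i
      have : l.formPerm x = π x := by
        rw [hform, Equiv.Perm.cycleOf_apply, if_pos (hmeml x hx)]
      rw [this]
      exact (hfeas x (hmoved x hx)).1
    have hlall : l ∈ allCycles k n := (mem_allCycles hk).2 ⟨hnd, h2, hlk⟩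
    have hsupmem : ∀ x ∈ l, x ∈ (π.cycleOf i).support := by
      intro x hx
      exact Equiv.Perm.mem_support_cycleOf_iff.2 ⟨hmeml x hx, hisup⟩
    have hil : i ∈ l :=
      Equiv.Perm.mem_toList_iff.2 ⟨Equiv.Perm.SameCycle.refl π i, hisup⟩
    rcases run_blocking (valid W) hval (allCycles k n) [] (sorted_allCycles k n)
        hlall (by intro a ha; exact absurd ha List.not_mem_nil) with hmem | hblock
    · exact ⟨l, fun _ => ⟨List.mem_toFinset.2 hmem, h2, le_of_eq hlen,
        i, hil, hsupmem i hil⟩⟩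
    · obtain ⟨a, haR, halen, x, hxl, hxa⟩ := hblock
      obtain ⟨-, h2a, -, -⟩ := chosen_spec hk haR
      exact ⟨a, fun _ => ⟨List.mem_toFinset.2 haR, h2a, by omega,
        x, hxa, hsupmem x hxl⟩⟩
  choose g hg using hmain
  have hmaps : ∀ i ∈ P, g i ∈ T := fun i hi => (hg i hi).1
  -- fiber bound
  have hfiber : ∀ c ∈ T, (P.filter (fun i => g i = c)).card ≤ c.length * k := by
    intro c hc
    have hsubset : P.filter (fun i => g i = c) ⊆
        c.toFinset.biUnion (fun x => (π.cycleOf x).support) := by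
      intro i hi
      obtain ⟨hiP, hgi⟩ := Finset.mem_filter.1 hi
      obtain ⟨-, -, -, x, hxc, hxsup⟩ := hg i hiP
      rw [hgi] at hxc
      obtain ⟨hsc, hisup⟩ := Equiv.Perm.mem_support_cycleOf_iff.1 hxsup
      have hxmoved : x ∈ π.support := by
        rw [Equiv.Perm.mem_support]
        intro hfix
        exact (Equiv.Perm.mem_support.1 hisup) (hsc.apply_eq_self_iff.2 hfix)
      refine Finset.mem_biUnion.2 ⟨x, List.mem_toFinset.2 hxc, ?_⟩
      exact Equiv.Perm.mem_support_cycleOf_iff.2 ⟨hsc.symm, hxmoved⟩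
    calc (P.filter (fun i => g i = c)).card
        ≤ (c.toFinset.biUnion (fun x => (π.cycleOf x).support)).card :=
          Finset.card_le_card hsubset
      _ ≤ ∑ x ∈ c.toFinset, (π.cycleOf x).support.card := Finset.card_biUnion_le
      _ ≤ ∑ _x ∈ c.toFinset, k := by
          refine Finset.sum_le_sum ?_
          intro x _
          by_cases hx : π x = x
          · rw [(Equiv.Perm.cycleOf_eq_one_iff π).2 hx]
            simp
          · exact (hfeas x hx).2
      _ = c.toFinset.card * k := by rw [Finset.sum_const, smul_eq_mul]
      _ ≤ c.length * k := by
          have := List.toFinset_card_le c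
          exact Nat.mul_le_mul_right k this
  -- assemble
  have hlam_nonneg : ∀ c ∈ T, 0 ≤ lam c.length := by
    intro c hc
    obtain ⟨-, h2, hkc, -⟩ := chosen_spec hk (List.mem_toFinset.1 hc)
    exact le_of_lt (hlam.1 c.length h2 hkc).1
  calc SW lam π = ∑ i ∈ P, lam (cycLen π i) := hSWπ
    _ ≤ ∑ i ∈ P, lam ((g i).length) := by
        refine Finset.sum_le_sum ?_
        intro i hi
        obtain ⟨hcT, h2, hle, -⟩ := hg i hi
        have hcyk : cycLen π i ≤ k := (hfeas i (Finset.mem_filter.1 hi).2).2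
        exact hlam.2 _ _ h2 hle hcyk
    _ = ∑ c ∈ T, ∑ i ∈ P.filter (fun i => g i = c), lam ((g i).length) :=
        (Finset.sum_fiberwise_of_maps_to hmaps _).symm
    _ = ∑ c ∈ T, ((P.filter (fun i => g i = c)).card : ℝ) * lam c.length := by
        refine Finset.sum_congr rfl ?_
        intro c _
        rw [Finset.sum_congr rfl (fun i hi => by
          rw [(Finset.mem_filter.1 hi).2]), Finset.sum_const, nsmul_eq_mul]
    _ ≤ ∑ c ∈ T, ((c.length : ℝ) * k) * lam c.length := by
        refine Finset.sum_le_sum ?_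
        intro c hc
        refine mul_le_mul_of_nonneg_right ?_ (hlam_nonneg c hc)
        have := hfiber c hc
        calc ((P.filter (fun i => g i = c)).card : ℝ)
            ≤ ((c.length * k : ℕ) : ℝ) := by exact_mod_cast this
          _ = (c.length : ℝ) * k := by push_cast; ring
    _ = (k : ℝ) * ∑ c ∈ T, (c.length : ℝ) * lam c.length := by
        rw [Finset.mul_sum]
        refine Finset.sum_congr rfl ?_
        intro c _
        ring

end Greedy

/-- Theorem: Greedy.  For every length bound `k ≥ 3` and every
(uniform or non-uniform) length function `λ`, there exists a truthful `(k,λ)`-BE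
mechanism with approximation ratio `k`. -/
theorem exists_truthful_mechanism_approx_k
    (k : ℕ) (hk : 3 ≤ k) (lam : ℕ → ℝ) (hlam : IsLengthFunction k lam) :
    ∃ f : Mechanism,
      IsMechanism k f ∧ Truthful k lam f ∧ ApproxRatio k lam f (k : ℝ) := by
  have hk2 : 2 ≤ k := by omega
  refine ⟨fun n W => Greedy.outPerm k W, ?_, ?_, ?_, ?_⟩
  · intro n W _
    exact Greedy.outPerm_feasible hk2
  · intro n Wstar W _ hsub i
    exact Greedy.outPerm_truthful hk2 lam hlam Wstar W hsub i
  · exact_mod_cast Nat.one_le_cast.2 (by omega : 1 ≤ k)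
  · intro n Wstar _ π hfeas
    have h1 : SW lam π ≤ (k : ℝ) *
        ∑ c ∈ (Greedy.chosen k Wstar).toFinset, (c.length : ℝ) * lam c.length :=
      Greedy.SW_le_k_mul hk2 lam hlam π hfeas
    have h2 : ∑ c ∈ (Greedy.chosen k Wstar).toFinset, (c.length : ℝ) * lam c.length
        ≤ SW lam (Greedy.outPerm k Wstar) := Greedy.SW_outPerm_ge hk2 lam hlam
    have hkR : (0 : ℝ) < (k : ℝ) := by
      have : (0 : ℕ) < k := by omega
      exact_mod_cast this
    calc (1 / (k : ℝ)) * SW lam π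
        ≤ (1 / (k : ℝ)) * ((k : ℝ) *
            ∑ c ∈ (Greedy.chosen k Wstar).toFinset, (c.length : ℝ) * lam c.length) := by
          refine mul_le_mul_of_nonneg_left h1 ?_
          positivity
      _ = ∑ c ∈ (Greedy.chosen k Wstar).toFinset, (c.length : ℝ) * lam c.length := by
          field_simp
      _ ≤ SW lam (Greedy.outPerm k Wstar) := h2


end

end BarterExchange
end

section
/- For every integer length bound k ≥ 3 and every real ε > 0, there exists a truthful mechanism for the k-BE problem (i.e., the (k,λ)-BE problem with the uniform length function λ ≡ 1) that admits approximation ratio k − 1 + ε. -/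
/-!
Barter exchange (BE) framework, following Emek–Shpiro,
"Barter Exchange with Bounded Trading Cycles".
-/

open Finset

namespace BarterExchange

noncomputable section

open Equiv Equiv.Perm

variable {α : Type*} [DecidableEq α]

/-- Connectivity counting: if `P` has no proper nonempty "closed" subfamily,
then `∑ (m'_q - 1) ≥ |P| - 1`. -/
theorem conn_count : ∀ (N : ℕ) (P Q : Finset (Finset α)) (C : Finset α),
    P.card ≤ N →
    (∀ p₁ ∈ P, ∀ p₂ ∈ P, p₁ ≠ p₂ → Disjoint p₁ p₂) →
    (∀ q ∈ Q, q ∩ C ⊆ P.sup id) →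
    (∀ S ⊆ P, S.Nonempty →
      (∀ q ∈ Q, (q ∩ S.sup id).Nonempty → q ∩ C ⊆ S.sup id) → P ⊆ S) →
    P.card ≤ (∑ q ∈ Q, ((P.filter fun p => (q ∩ p).Nonempty).card - 1)) + 1 := by
  intro N
  induction N with
  | zero =>
    intro P Q C hcard _ _ _
    omega
  | succ N ih =>
    intro P Q C hcard hdisj hsub hclosed
    by_cases h2 : P.card ≤ 1
    · omega
    push_neg at h2
    by_cases hex : ∃ q ∈ Q, 2 ≤ (P.filter fun p => (q ∩ p).Nonempty).card
    · obtain ⟨qs, hqsQ, hqs2⟩ := hex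
      obtain ⟨p₁, hp₁f, p₂, hp₂f, hne⟩ := Finset.one_lt_card.mp hqs2
      obtain ⟨hp₁P, hq₁⟩ := Finset.mem_filter.mp hp₁f
      obtain ⟨hp₂P, hq₂⟩ := Finset.mem_filter.mp hp₂f
      set E : Finset (Finset α) := (P.erase p₁).erase p₂ with hE
      set P' : Finset (Finset α) := insert (p₁ ∪ p₂) E with hP'
      have hp₂E : p₂ ∈ P.erase p₁ := Finset.mem_erase.mpr ⟨fun h => hne h.symm, hp₂P⟩
      have hEmem : ∀ x ∈ E, x ∈ P ∧ x ≠ p₁ ∧ x ≠ p₂ := by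
        intro x hx
        have h2 := Finset.mem_erase.mp hx
        have h1 := Finset.mem_erase.mp h2.2
        exact ⟨h1.2, h1.1, h2.1⟩
      have hsplitP : ∀ (g : Finset α → ℕ), ∑ p ∈ P, g p = g p₁ + g p₂ + ∑ p ∈ E, g p := by
        intro g
        rw [hE, ← Finset.add_sum_erase _ g hp₁P, ← Finset.add_sum_erase _ g hp₂E, add_assoc]
      have hnotmem : (p₁ ∪ p₂) ∉ E := by
        intro hmem
        obtain ⟨hP3, hne1, _⟩ := hEmem _ hmem
        have hd : Disjoint (p₁ ∪ p₂) p₁ := hdisj _ hP3 _ hp₁P hne1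
        obtain ⟨x, hx⟩ := hq₁
        have hxp₁ : x ∈ p₁ := (Finset.mem_inter.mp hx).2
        exact (Finset.disjoint_left.mp hd (Finset.mem_union_left _ hxp₁)) hxp₁
      have hcardE : E.card + 2 = P.card := by
        rw [hE, Finset.card_erase_of_mem hp₂E, Finset.card_erase_of_mem hp₁P]
        omega
      have hcardP' : P'.card + 1 = P.card := by
        rw [hP', Finset.card_insert_of_notMem hnotmem]; omega
      -- sup equality
      have hsupE : P'.sup id = P.sup id := by
        apply Finset.Subset.antisymm
        · intro x hx
          rw [Finset.mem_sup] at hx ⊢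
          obtain ⟨v, hv, hxv⟩ := hx
          rcases Finset.mem_insert.mp hv with h | h
          · subst h
            rcases Finset.mem_union.mp hxv with h' | h'
            exacts [⟨p₁, hp₁P, h'⟩, ⟨p₂, hp₂P, h'⟩]
          · exact ⟨v, (hEmem _ h).1, hxv⟩
        · intro x hx
          rw [Finset.mem_sup] at hx ⊢
          obtain ⟨v, hv, hxv⟩ := hx
          by_cases hv1 : v = p₁
          · exact ⟨p₁ ∪ p₂, Finset.mem_insert_self _ _, by subst hv1; exact Finset.mem_union_left _ hxv⟩
          by_cases hv2 : v = p₂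
          · exact ⟨p₁ ∪ p₂, Finset.mem_insert_self _ _, by subst hv2; exact Finset.mem_union_right _ hxv⟩
          · exact ⟨v, Finset.mem_insert_of_mem (Finset.mem_erase.mpr ⟨hv2, Finset.mem_erase.mpr ⟨hv1, hv⟩⟩), hxv⟩
      -- pairwise disjoint on P'
      have hdisj' : ∀ a ∈ P', ∀ b ∈ P', a ≠ b → Disjoint a b := by
        intro a ha b hb hab
        rcases Finset.mem_insert.mp ha with ha' | ha' <;> rcases Finset.mem_insert.mp hb with hb' | hb'
        · exact absurd (ha'.trans hb'.symm) hab
        · subst ha'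
          obtain ⟨hbP, hb1, hb2⟩ := hEmem _ hb'
          exact Finset.disjoint_union_left.mpr
            ⟨(hdisj _ hbP _ hp₁P hb1).symm, (hdisj _ hbP _ hp₂P hb2).symm⟩
        · subst hb'
          obtain ⟨haP, ha1, ha2⟩ := hEmem _ ha'
          exact (Finset.disjoint_union_left.mpr
            ⟨(hdisj _ haP _ hp₁P ha1).symm, (hdisj _ haP _ hp₂P ha2).symm⟩).symm
        · exact hdisj _ (hEmem _ ha').1 _ (hEmem _ hb').1 hab
      -- closedness transfer
      have hclosed' : ∀ S' ⊆ P', S'.Nonempty →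
          (∀ q ∈ Q, (q ∩ S'.sup id).Nonempty → q ∩ C ⊆ S'.sup id) → P' ⊆ S' := by
        intro S' hS'P hS'ne hS'cl
        by_cases hmm : (p₁ ∪ p₂) ∈ S'
        · set S : Finset (Finset α) := insert p₁ (insert p₂ (S'.erase (p₁ ∪ p₂))) with hS
          have hSP : S ⊆ P := by
            intro x hx
            rcases Finset.mem_insert.mp hx with h | h
            · exact h ▸ hp₁P
            rcases Finset.mem_insert.mp h with h' | h'
            · exact h' ▸ hp₂P
            · obtain ⟨hxne, hxS'⟩ := Finset.mem_erase.mp h'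
              rcases Finset.mem_insert.mp (hS'P hxS') with h'' | h''
              · exact absurd h'' hxne
              · exact (hEmem _ h'').1
          have hsupS : S.sup id = S'.sup id := by
            apply Finset.Subset.antisymm
            · intro x hx
              rw [Finset.mem_sup] at hx ⊢
              obtain ⟨v, hv, hxv⟩ := hx
              rcases Finset.mem_insert.mp hv with h | h
              · exact ⟨p₁ ∪ p₂, hmm, h ▸ Finset.mem_union_left _ hxv⟩
              rcases Finset.mem_insert.mp h with h' | h'
              · exact ⟨p₁ ∪ p₂, hmm, h' ▸ Finset.mem_union_right _ hxv⟩
              · exact ⟨v, (Finset.mem_erase.mp h').2, hxv⟩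
            · intro x hx
              rw [Finset.mem_sup] at hx ⊢
              obtain ⟨v, hv, hxv⟩ := hx
              by_cases hv12 : v = p₁ ∪ p₂
              · subst hv12
                rcases Finset.mem_union.mp hxv with h' | h'
                · exact ⟨p₁, Finset.mem_insert_self _ _, h'⟩
                · exact ⟨p₂, Finset.mem_insert_of_mem (Finset.mem_insert_self _ _), h'⟩
              · exact ⟨v, Finset.mem_insert_of_mem (Finset.mem_insert_of_mem
                  (Finset.mem_erase.mpr ⟨hv12, hv⟩)), hxv⟩
          have hPS : P ⊆ S := by
            apply hclosed S hSP ⟨p₁, Finset.mem_insert_self _ _⟩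
            intro q hq hqS
            rw [hsupS] at hqS ⊢
            exact hS'cl q hq hqS
          intro y hy
          rcases Finset.mem_insert.mp hy with h | h
          · exact h ▸ hmm
          · obtain ⟨hyP, hy1, hy2⟩ := hEmem _ h
            have := hPS hyP
            rcases Finset.mem_insert.mp this with h' | h'
            · exact absurd h' hy1
            rcases Finset.mem_insert.mp h' with h'' | h''
            · exact absurd h'' hy2
            · exact (Finset.mem_erase.mp h'').2
        · -- p₁ ∪ p₂ ∉ S' : S' ⊆ P, get P ⊆ S', contradiction via p₁
          have hSP : S' ⊆ P := by
            intro x hx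
            rcases Finset.mem_insert.mp (hS'P hx) with h | h
            · exact absurd (h ▸ hx) hmm
            · exact (hEmem _ h).1
          have hPS : P ⊆ S' := hclosed S' hSP hS'ne hS'cl
          have hp₁S' : p₁ ∈ S' := hPS hp₁P
          have := hS'P hp₁S'
          rcases Finset.mem_insert.mp this with h | h
          · -- p₁ = p₁ ∪ p₂ : then p₂ ⊆ p₁, contradicting disjointness & nonempty
            exfalso
            obtain ⟨x, hx⟩ := hq₂
            have hxp₂ : x ∈ p₂ := (Finset.mem_inter.mp hx).2
            have hxp₁ : x ∈ p₁ := h ▸ Finset.mem_union_right _ hxp₂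
            exact (Finset.disjoint_left.mp (hdisj _ hp₁P _ hp₂P hne) hxp₁) hxp₂
          · exact absurd h (by
              intro hcon
              exact (hEmem _ hcon).2.1 rfl)
      have hih := ih P' Q C (by omega) hdisj' (fun q hq => (hsupE ▸ hsub q hq)) hclosed'
      -- compare the sums
      have hg : ∀ q ∈ Q, (P'.filter fun p => (q ∩ p).Nonempty).card
          ≤ (P.filter fun p => (q ∩ p).Nonempty).card := by
        intro q _
        have h1 : ∀ (R : Finset (Finset α)), (R.filter fun p => (q ∩ p).Nonempty).card
            = ∑ p ∈ R, (if (q ∩ p).Nonempty then 1 else 0) := by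
          intro R; rw [Finset.card_filter]
        rw [h1, h1]
        rw [hP', Finset.sum_insert hnotmem, hsplitP (fun p => if (q ∩ p).Nonempty then 1 else 0)]
        have htri : (q ∩ (p₁ ∪ p₂)).Nonempty → (q ∩ p₁).Nonempty ∨ (q ∩ p₂).Nonempty := by
          rintro ⟨x, hx⟩
          rcases Finset.mem_union.mp (Finset.mem_inter.mp hx).2 with h' | h'
          · exact Or.inl ⟨x, Finset.mem_inter.mpr ⟨(Finset.mem_inter.mp hx).1, h'⟩⟩
          · exact Or.inr ⟨x, Finset.mem_inter.mpr ⟨(Finset.mem_inter.mp hx).1, h'⟩⟩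
        by_cases hu : (q ∩ (p₁ ∪ p₂)).Nonempty
        · rcases htri hu with h' | h' <;> simp only [hu, h', if_true] <;> split_ifs <;> omega
        · simp only [hu, if_false] <;> split_ifs <;> omega
      have hgs : (P'.filter fun p => (qs ∩ p).Nonempty).card
          < (P.filter fun p => (qs ∩ p).Nonempty).card := by
        have h1 : ∀ (R : Finset (Finset α)), (R.filter fun p => (qs ∩ p).Nonempty).card
            = ∑ p ∈ R, (if (qs ∩ p).Nonempty then 1 else 0) := by
          intro R; rw [Finset.card_filter]
        rw [h1, h1]
        rw [hP', Finset.sum_insert hnotmem, hsplitP (fun p => if (qs ∩ p).Nonempty then 1 else 0)]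
        simp only [if_pos hq₁, if_pos hq₂]
        have : (if (qs ∩ (p₁ ∪ p₂)).Nonempty then 1 else 0) ≤ 1 := by split_ifs <;> omega
        omega
      have hqmem : 1 ≤ (P'.filter fun p => (qs ∩ p).Nonempty).card := by
        apply Finset.card_pos.mpr
        refine ⟨p₁ ∪ p₂, Finset.mem_filter.mpr ⟨Finset.mem_insert_self _ _, ?_⟩⟩
        obtain ⟨x, hx⟩ := hq₁
        exact ⟨x, Finset.mem_inter.mpr ⟨(Finset.mem_inter.mp hx).1,
          Finset.mem_union_left _ (Finset.mem_inter.mp hx).2⟩⟩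
      have hsum : (∑ q ∈ Q, ((P'.filter fun p => (q ∩ p).Nonempty).card - 1)) + 1
          ≤ ∑ q ∈ Q, ((P.filter fun p => (q ∩ p).Nonempty).card - 1) := by
        have : ∑ q ∈ Q, ((P'.filter fun p => (q ∩ p).Nonempty).card - 1)
            < ∑ q ∈ Q, ((P.filter fun p => (q ∩ p).Nonempty).card - 1) := by
          apply Finset.sum_lt_sum
          · intro q hq
            have := hg q hq; omega
          · exact ⟨qs, hqsQ, by have := hgs; have := hqmem; omega⟩
        omega
      omega
    · -- no q touches two distinct members: {p} is closed for any p, contradiction with card ≥ 2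
      push_neg at hex
      obtain ⟨p, hp⟩ := Finset.card_pos.mp (by omega : 0 < P.card)
      have hcl : ∀ q ∈ Q, (q ∩ Finset.sup {p} id).Nonempty → q ∩ C ⊆ Finset.sup {p} id := by
        intro q hq hqp
        rw [Finset.sup_singleton] at hqp ⊢
        intro x hx
        have hxP : x ∈ P.sup id := hsub q hq hx
        rw [Finset.mem_sup] at hxP
        obtain ⟨p', hp'P, hxp'⟩ := hxP
        have hp'f : p' ∈ P.filter fun r => (q ∩ r).Nonempty :=
          Finset.mem_filter.mpr ⟨hp'P, ⟨x, Finset.mem_inter.mpr ⟨(Finset.mem_inter.mp hx).1, hxp'⟩⟩⟩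
        have hpf : p ∈ P.filter fun r => (q ∩ r).Nonempty :=
          Finset.mem_filter.mpr ⟨hp, hqp⟩
        have hcard1 := hex q hq
        have : p' = p := by
          by_contra hne
          have : 2 ≤ (P.filter fun r => (q ∩ r).Nonempty).card :=
            Finset.one_lt_card.mpr ⟨p', hp'f, p, hpf, hne⟩
          omega
        exact this ▸ hxp'
      have := hclosed {p} (Finset.singleton_subset_iff.mpr hp) ⟨p, Finset.mem_singleton_self p⟩ hcl
      have hcard : P.card ≤ 1 := by
        calc P.card ≤ ({p} : Finset (Finset α)).card := Finset.card_le_card this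
        _ = 1 := Finset.card_singleton p
      omega



theorem abs_count (k : ℕ) (hk : 2 ≤ k) :
    ∀ (N : ℕ) (P Q : Finset (Finset α)),
    P.card ≤ N →
    (∀ p₁ ∈ P, ∀ p₂ ∈ P, p₁ ≠ p₂ → Disjoint p₁ p₂) →
    (∀ q₁ ∈ Q, ∀ q₂ ∈ Q, q₁ ≠ q₂ → Disjoint q₁ q₂) →
    (∀ p ∈ P, p.card ≤ k) →
    (∀ q ∈ Q, q.card ≤ k) →
    (∀ q ∈ Q, (q ∩ P.sup id).Nonempty) →
    (∀ S ⊆ P, S.Nonempty →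
      (∀ q ∈ Q, (q ∩ S.sup id).Nonempty → q ∩ P.sup id ⊆ S.sup id) →
      S.sup id ⊆ Q.sup id →
      ∀ q ∈ Q, q ∩ P.sup id ⊆ S.sup id → q ⊆ P.sup id) →
    (∑ q ∈ Q, q.card) + (P.sup id).card ≤ k * (P.sup id).card := by
  intro N
  induction N with
  | zero =>
    intro P Q hcard _ _ _ _ hQC _
    have hP0 : P = ∅ := Finset.card_eq_zero.mp (Nat.le_zero.mp hcard)
    subst hP0
    have hQ0 : Q = ∅ := by
      apply Finset.eq_empty_of_forall_notMem
      intro q hq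
      have := hQC q hq
      simp at this
    subst hQ0
    simp
  | succ N ih =>
    intro P Q hcard hPd hQd hPk hQk hQC H
    by_cases hprop : ∃ S ⊆ P, S.Nonempty ∧
        (∀ q ∈ Q, (q ∩ S.sup id).Nonempty → q ∩ P.sup id ⊆ S.sup id) ∧ S ≠ P
    · obtain ⟨S, hSP, hSne, hScl, hSneq⟩ := hprop
      have hTP : P \ S ⊆ P := Finset.sdiff_subset
      have hPST : P = S ∪ (P \ S) := (Finset.union_sdiff_of_subset hSP).symm
      have hCsplit : P.sup id = S.sup id ∪ (P \ S).sup id := by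
        conv_lhs => rw [hPST]
        rw [Finset.sup_union]; rfl
      have hC₁C : S.sup id ⊆ P.sup id := Finset.sup_mono hSP
      have hC₂C : (P \ S).sup id ⊆ P.sup id := Finset.sup_mono hTP
      have hdisjC : Disjoint (S.sup id) ((P \ S).sup id) := by
        rw [Finset.disjoint_left]
        intro x hx1 hx2
        rw [Finset.mem_sup] at hx1 hx2
        obtain ⟨p, hpS, hxp⟩ := hx1
        obtain ⟨p', hp'T, hxp'⟩ := hx2
        have hne : p ≠ p' := fun h => (Finset.mem_sdiff.mp hp'T).2 (h ▸ hpS)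
        exact (Finset.disjoint_left.mp (hPd p (hSP hpS) p' (hTP hp'T) hne) hxp) hxp'
      have hQ₁sub : Q.filter (fun q => q ∩ P.sup id ⊆ S.sup id) ⊆ Q := Finset.filter_subset _ _
      have hQ₂sub : Q.filter (fun q => ¬ (q ∩ P.sup id ⊆ S.sup id)) ⊆ Q := Finset.filter_subset _ _
      -- properties of Q₂ members
      have hQ₂C₁ : ∀ q ∈ Q.filter (fun q => ¬ (q ∩ P.sup id ⊆ S.sup id)),
          q ∩ S.sup id = ∅ := by
        intro q hq
        obtain ⟨hqQ, hqn⟩ := Finset.mem_filter.mp hq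
        by_contra hne
        exact hqn (hScl q hqQ (Finset.nonempty_of_ne_empty hne))
      have hQ₂C : ∀ q ∈ Q.filter (fun q => ¬ (q ∩ P.sup id ⊆ S.sup id)),
          q ∩ (P \ S).sup id = q ∩ P.sup id := by
        intro q hq
        apply Finset.Subset.antisymm
        · exact Finset.inter_subset_inter (Finset.Subset.refl q) hC₂C
        · intro x hx
          have hxq := (Finset.mem_inter.mp hx).1
          have hxC := (Finset.mem_inter.mp hx).2
          rw [hCsplit] at hxC
          rcases Finset.mem_union.mp hxC with h | h
          · exfalso
            have : x ∈ q ∩ S.sup id := Finset.mem_inter.mpr ⟨hxq, h⟩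
            rw [hQ₂C₁ q hq] at this
            exact absurd this (Finset.notMem_empty x)
          · exact Finset.mem_inter.mpr ⟨hxq, h⟩
      have hQ₁C : ∀ q ∈ Q.filter (fun q => q ∩ P.sup id ⊆ S.sup id),
          q ∩ S.sup id = q ∩ P.sup id := by
        intro q hq
        obtain ⟨hqQ, hqs⟩ := Finset.mem_filter.mp hq
        apply Finset.Subset.antisymm
        · exact Finset.inter_subset_inter (Finset.Subset.refl q) hC₁C
        · intro x hx
          exact Finset.mem_inter.mpr ⟨(Finset.mem_inter.mp hx).1, hqs hx⟩
      -- H transfer to (S, Q₁)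
      have H₁ : ∀ S' ⊆ S, S'.Nonempty →
          (∀ q ∈ Q.filter (fun q => q ∩ P.sup id ⊆ S.sup id),
            (q ∩ S'.sup id).Nonempty → q ∩ S.sup id ⊆ S'.sup id) →
          S'.sup id ⊆ (Q.filter (fun q => q ∩ P.sup id ⊆ S.sup id)).sup id →
          ∀ q ∈ Q.filter (fun q => q ∩ P.sup id ⊆ S.sup id),
            q ∩ S.sup id ⊆ S'.sup id → q ⊆ S.sup id := by
        intro S' hS'S hS'ne hS'cl hS'sup q hq hqS'
        have hS'P : S' ⊆ P := hS'S.trans hSP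
        have hS'C₁ : S'.sup id ⊆ S.sup id := Finset.sup_mono hS'S
        -- closedness wrt all of Q
        have hclQ : ∀ r ∈ Q, (r ∩ S'.sup id).Nonempty → r ∩ P.sup id ⊆ S'.sup id := by
          intro r hr hrS'
          by_cases h1 : r ∩ P.sup id ⊆ S.sup id
          · have hrQ₁ : r ∈ Q.filter (fun q => q ∩ P.sup id ⊆ S.sup id) :=
              Finset.mem_filter.mpr ⟨hr, h1⟩
            rw [← hQ₁C r hrQ₁]
            exact hS'cl r hrQ₁ hrS'
          · exfalso
            have hrQ₂ : r ∈ Q.filter (fun q => ¬ (q ∩ P.sup id ⊆ S.sup id)) :=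
              Finset.mem_filter.mpr ⟨hr, h1⟩
            obtain ⟨x, hx⟩ := hrS'
            have : x ∈ r ∩ S.sup id := Finset.mem_inter.mpr
              ⟨(Finset.mem_inter.mp hx).1, hS'C₁ (Finset.mem_inter.mp hx).2⟩
            rw [hQ₂C₁ r hrQ₂] at this
            exact absurd this (Finset.notMem_empty x)
        have hsupQ : S'.sup id ⊆ Q.sup id :=
          hS'sup.trans (Finset.sup_mono hQ₁sub)
        have hqC : q ⊆ P.sup id := by
          apply H S' hS'P hS'ne hclQ hsupQ q (hQ₁sub hq)
          rw [← hQ₁C q hq]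
          exact hqS'
        intro x hxq
        have hxC : x ∈ q ∩ P.sup id := Finset.mem_inter.mpr ⟨hxq, hqC hxq⟩
        exact (Finset.mem_filter.mp hq).2 hxC
      -- H transfer to (P \ S, Q₂)
      have H₂ : ∀ S' ⊆ P \ S, S'.Nonempty →
          (∀ q ∈ Q.filter (fun q => ¬ (q ∩ P.sup id ⊆ S.sup id)),
            (q ∩ S'.sup id).Nonempty → q ∩ (P \ S).sup id ⊆ S'.sup id) →
          S'.sup id ⊆ (Q.filter (fun q => ¬ (q ∩ P.sup id ⊆ S.sup id))).sup id →
          ∀ q ∈ Q.filter (fun q => ¬ (q ∩ P.sup id ⊆ S.sup id)),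
            q ∩ (P \ S).sup id ⊆ S'.sup id → q ⊆ (P \ S).sup id := by
        intro S' hS'T hS'ne hS'cl hS'sup q hq hqS'
        have hS'P : S' ⊆ P := hS'T.trans hTP
        have hS'C₂ : S'.sup id ⊆ (P \ S).sup id := Finset.sup_mono hS'T
        have hclQ : ∀ r ∈ Q, (r ∩ S'.sup id).Nonempty → r ∩ P.sup id ⊆ S'.sup id := by
          intro r hr hrS'
          by_cases h1 : r ∩ P.sup id ⊆ S.sup id
          · exfalso
            obtain ⟨x, hx⟩ := hrS'
            have hxr := (Finset.mem_inter.mp hx).1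
            have hxC₂ : x ∈ (P \ S).sup id := hS'C₂ (Finset.mem_inter.mp hx).2
            have hxC : x ∈ P.sup id := hC₂C hxC₂
            have hxC₁ : x ∈ S.sup id := h1 (Finset.mem_inter.mpr ⟨hxr, hxC⟩)
            exact (Finset.disjoint_left.mp hdisjC hxC₁) hxC₂
          · have hrQ₂ : r ∈ Q.filter (fun q => ¬ (q ∩ P.sup id ⊆ S.sup id)) :=
              Finset.mem_filter.mpr ⟨hr, h1⟩
            rw [← hQ₂C r hrQ₂]
            exact hS'cl r hrQ₂ hrS'
        have hsupQ : S'.sup id ⊆ Q.sup id :=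
          hS'sup.trans (Finset.sup_mono hQ₂sub)
        have hqC : q ⊆ P.sup id := by
          apply H S' hS'P hS'ne hclQ hsupQ q (hQ₂sub hq)
          rw [← hQ₂C q hq]
          exact hqS'
        intro x hxq
        have hxC : x ∈ q ∩ P.sup id := Finset.mem_inter.mpr ⟨hxq, hqC hxq⟩
        rw [← hQ₂C q hq] at hxC
        exact (Finset.mem_inter.mp hxC).2
      -- cardinalities
      have hScard : S.card < P.card :=
        Finset.card_lt_card (Finset.ssubset_iff_subset_ne.mpr ⟨hSP, hSneq⟩)
      have hTcard : (P \ S).card < P.card := by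
        obtain ⟨p, hpS⟩ := hSne
        have hnp : p ∉ P \ S := fun h => (Finset.mem_sdiff.mp h).2 hpS
        exact Finset.card_lt_card ((Finset.ssubset_iff_of_subset hTP).mpr ⟨p, hSP hpS, hnp⟩)
      have ih₁ := ih S (Q.filter (fun q => q ∩ P.sup id ⊆ S.sup id)) (by omega)
        (fun a ha b hb hab => hPd a (hSP ha) b (hSP hb) hab)
        (fun a ha b hb hab => hQd a (hQ₁sub ha) b (hQ₁sub hb) hab)
        (fun p hp => hPk p (hSP hp))
        (fun q hq => hQk q (hQ₁sub hq))
        (fun q hq => by rw [hQ₁C q hq]; exact hQC q (hQ₁sub hq))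
        H₁
      have ih₂ := ih (P \ S) (Q.filter (fun q => ¬ (q ∩ P.sup id ⊆ S.sup id))) (by omega)
        (fun a ha b hb hab => hPd a (hTP ha) b (hTP hb) hab)
        (fun a ha b hb hab => hQd a (hQ₂sub ha) b (hQ₂sub hb) hab)
        (fun p hp => hPk p (hTP hp))
        (fun q hq => hQk q (hQ₂sub hq))
        (fun q hq => by rw [hQ₂C q hq]; exact hQC q (hQ₂sub hq))
        H₂
      have hsum : ∑ q ∈ Q, q.card
          = ∑ q ∈ Q.filter (fun q => q ∩ P.sup id ⊆ S.sup id), q.card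
            + ∑ q ∈ Q.filter (fun q => ¬ (q ∩ P.sup id ⊆ S.sup id)), q.card :=
        (Finset.sum_filter_add_sum_filter_not Q _ _).symm
      have hcardC : (P.sup id).card = (S.sup id).card + ((P \ S).sup id).card := by
        rw [hCsplit, Finset.card_union_of_disjoint hdisjC]
      rw [hsum, hcardC]
      calc ∑ q ∈ Q.filter (fun q => q ∩ P.sup id ⊆ S.sup id), q.card
            + ∑ q ∈ Q.filter (fun q => ¬ (q ∩ P.sup id ⊆ S.sup id)), q.card
            + ((S.sup id).card + ((P \ S).sup id).card)
          = (∑ q ∈ Q.filter (fun q => q ∩ P.sup id ⊆ S.sup id), q.card + (S.sup id).card)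
            + (∑ q ∈ Q.filter (fun q => ¬ (q ∩ P.sup id ⊆ S.sup id)), q.card
              + ((P \ S).sup id).card) := by ring
        _ ≤ k * (S.sup id).card + k * ((P \ S).sup id).card := Nat.add_le_add ih₁ ih₂
        _ = k * ((S.sup id).card + ((P \ S).sup id).card) := by ring
    · -- "connected" case
      push_neg at hprop
      have hclosed : ∀ S ⊆ P, S.Nonempty →
          (∀ q ∈ Q, (q ∩ S.sup id).Nonempty → q ∩ P.sup id ⊆ S.sup id) → P ⊆ S := by
        intro S hSP hSne hScl
        rw [hprop S hSP hSne hScl]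
      by_cases hall : ∀ q ∈ Q, q ⊆ P.sup id
      · -- all q inside C
        have h1 : ∑ q ∈ Q, q.card ≤ (P.sup id).card := by
          rw [← Finset.card_biUnion (fun a ha b hb hab => hQd a ha b hb hab)]
          apply Finset.card_le_card
          intro x hx
          rw [Finset.mem_biUnion] at hx
          obtain ⟨q, hq, hxq⟩ := hx
          exact hall q hq hxq
        calc (∑ q ∈ Q, q.card) + (P.sup id).card
            ≤ (P.sup id).card + (P.sup id).card := Nat.add_le_add_right h1 _
          _ = 2 * (P.sup id).card := by ring
          _ ≤ k * (P.sup id).card := Nat.mul_le_mul_right _ hk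
      · push_neg at hall
        obtain ⟨q₀, hq₀Q, hq₀⟩ := hall
        have hPne : P.Nonempty := by
          obtain ⟨x, hx⟩ := hQC q₀ hq₀Q
          have := (Finset.mem_inter.mp hx).2
          rw [Finset.mem_sup] at this
          obtain ⟨p, hp, _⟩ := this
          exact ⟨p, hp⟩
        -- there exists z ∈ C uncovered by Q
        have hz : ∃ z ∈ P.sup id, z ∉ Q.sup id := by
          by_contra hcon
          push_neg at hcon
          have := H P (Finset.Subset.refl P) hPne
            (fun q hq _ => Finset.inter_subset_right) hcon q₀ hq₀Q
            Finset.inter_subset_right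
          exact hq₀ this
        obtain ⟨z, hzC, hzQ⟩ := hz
        -- counting
        have hm'1 : ∀ q ∈ Q, 1 ≤ (P.filter fun p => (q ∩ p).Nonempty).card := by
          intro q hq
          apply Finset.card_pos.mpr
          obtain ⟨x, hx⟩ := hQC q hq
          have hxC := (Finset.mem_inter.mp hx).2
          rw [Finset.mem_sup] at hxC
          obtain ⟨p, hpP, hxp⟩ := hxC
          exact ⟨p, Finset.mem_filter.mpr ⟨hpP, ⟨x, Finset.mem_inter.mpr ⟨(Finset.mem_inter.mp hx).1, hxp⟩⟩⟩⟩
        have hm'm : ∀ q ∈ Q, (P.filter fun p => (q ∩ p).Nonempty).card ≤ (q ∩ P.sup id).card := by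
          intro q hq
          have hdec : q ∩ P.sup id = P.biUnion (fun p => q ∩ p) := by
            ext x
            rw [Finset.mem_inter, Finset.mem_biUnion, Finset.mem_sup]
            constructor
            · rintro ⟨hxq, p, hpP, hxp⟩
              exact ⟨p, hpP, Finset.mem_inter.mpr ⟨hxq, hxp⟩⟩
            · rintro ⟨p, hpP, hx⟩
              exact ⟨(Finset.mem_inter.mp hx).1, p, hpP, (Finset.mem_inter.mp hx).2⟩
          rw [hdec, Finset.card_biUnion (fun a ha b hb hab =>
            Finset.disjoint_left.mpr (fun x hx1 hx2 =>
              Finset.disjoint_left.mp (hPd a ha b hb hab)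
                (Finset.mem_inter.mp hx1).2 (Finset.mem_inter.mp hx2).2))]
          calc (P.filter fun p => (q ∩ p).Nonempty).card
              = ∑ p ∈ P.filter (fun p => (q ∩ p).Nonempty), 1 := by
                rw [Finset.sum_const, smul_eq_mul, mul_one]
            _ ≤ ∑ p ∈ P.filter (fun p => (q ∩ p).Nonempty), (q ∩ p).card := by
                apply Finset.sum_le_sum
                intro p hp
                exact Finset.card_pos.mpr (Finset.mem_filter.mp hp).2
            _ ≤ ∑ p ∈ P, (q ∩ p).card :=
                Finset.sum_le_sum_of_subset (Finset.filter_subset _ _)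
        have hmC : (∑ q ∈ Q, (q ∩ P.sup id).card) + 1 ≤ (P.sup id).card := by
          have hdec : ∑ q ∈ Q, (q ∩ P.sup id).card = (Q.biUnion (fun q => q ∩ P.sup id)).card := by
            rw [Finset.card_biUnion (fun a ha b hb hab =>
              Finset.disjoint_left.mpr (fun x hx1 hx2 =>
                Finset.disjoint_left.mp (hQd a ha b hb hab)
                  (Finset.mem_inter.mp hx1).1 (Finset.mem_inter.mp hx2).1))]
          have hsub2 : Q.biUnion (fun q => q ∩ P.sup id) ⊆ (P.sup id).erase z := by
            intro x hx
            rw [Finset.mem_biUnion] at hx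
            obtain ⟨q, hq, hxq⟩ := hx
            apply Finset.mem_erase.mpr
            constructor
            · intro hxz
              subst hxz
              apply hzQ
              rw [Finset.mem_sup]
              exact ⟨q, hq, (Finset.mem_inter.mp hxq).1⟩
            · exact (Finset.mem_inter.mp hxq).2
          have := Finset.card_le_card hsub2
          rw [Finset.card_erase_of_mem hzC] at this
          have hCpos : 1 ≤ (P.sup id).card := Finset.card_pos.mpr ⟨z, hzC⟩
          omega
        have hconn := conn_count P.card P Q (P.sup id) (le_refl _) hPd
          (fun q _ => Finset.inter_subset_right) hclosed
        have hCkP : (P.sup id).card ≤ k * P.card := by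
          rw [Finset.sup_eq_biUnion]
          calc (P.biUnion id).card ≤ ∑ p ∈ P, (id p).card := Finset.card_biUnion_le
            _ ≤ ∑ _p ∈ P, k := Finset.sum_le_sum (fun p hp => hPk p hp)
            _ = P.card * k := by rw [Finset.sum_const, smul_eq_mul]
            _ = k * P.card := Nat.mul_comm _ _
        -- |Q| + Σ(m'-1) = Σ m'
        have hQm' : Q.card + ∑ q ∈ Q, ((P.filter fun p => (q ∩ p).Nonempty).card - 1)
            = ∑ q ∈ Q, (P.filter fun p => (q ∩ p).Nonempty).card := by
          rw [Finset.card_eq_sum_ones, ← Finset.sum_add_distrib]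
          exact Finset.sum_congr rfl (fun q hq => by have := hm'1 q hq; omega)
        have hm'sum : ∑ q ∈ Q, (P.filter fun p => (q ∩ p).Nonempty).card
            ≤ ∑ q ∈ Q, (q ∩ P.sup id).card := Finset.sum_le_sum hm'm
        have hQP : Q.card + P.card ≤ (P.sup id).card := by omega
        have hQsum : ∑ q ∈ Q, q.card ≤ k * Q.card := by
          calc ∑ q ∈ Q, q.card ≤ ∑ _q ∈ Q, k := Finset.sum_le_sum hQk
            _ = Q.card * k := by rw [Finset.sum_const, smul_eq_mul]
            _ = k * Q.card := Nat.mul_comm _ _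
        calc (∑ q ∈ Q, q.card) + (P.sup id).card
            ≤ k * Q.card + k * P.card := Nat.add_le_add hQsum hCkP
          _ = k * (Q.card + P.card) := by ring
          _ ≤ k * (P.sup id).card := Nat.mul_le_mul_left k hQP



variable {n : ℕ}

/-- Restriction of a permutation to an invariant finite set. -/
def restr (g : Equiv.Perm (Fin n)) (A : Finset (Fin n)) (h : ∀ x, x ∈ A ↔ g x ∈ A) :
    Equiv.Perm (Fin n) :=
  Equiv.Perm.ofSubtype (g.subtypePerm (fun x => (h x).symm))

theorem restr_apply_mem (g : Equiv.Perm (Fin n)) (A : Finset (Fin n)) (h) {x : Fin n}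
    (hx : x ∈ A) : restr g A h x = g x :=
  Equiv.Perm.ofSubtype_subtypePerm_of_mem (fun x => (h x).symm) hx

theorem restr_apply_not_mem (g : Equiv.Perm (Fin n)) (A : Finset (Fin n)) (h) {x : Fin n}
    (hx : x ∉ A) : restr g A h x = x :=
  Equiv.Perm.ofSubtype_subtypePerm_of_not_mem (fun x => (h x).symm) hx

theorem restr_zpow (g : Equiv.Perm (Fin n)) (A : Finset (Fin n)) (h) (i : ℤ) {x : Fin n}
    (hx : x ∈ A) : ((restr g A h) ^ i) x = (g ^ i) x := by
  unfold restr
  rw [← map_zpow, Equiv.Perm.subtypePerm_zpow]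
  exact Equiv.Perm.ofSubtype_subtypePerm_of_mem _ hx

theorem restr_sameCycle (g : Equiv.Perm (Fin n)) (A : Finset (Fin n)) (h) {x y : Fin n}
    (hx : x ∈ A) : (restr g A h).SameCycle x y ↔ g.SameCycle x y := by
  constructor
  · rintro ⟨i, hi⟩
    exact ⟨i, by rw [← restr_zpow g A h i hx]; exact hi⟩
  · rintro ⟨i, hi⟩
    exact ⟨i, by rw [restr_zpow g A h i hx]; exact hi⟩

theorem restr_support (g : Equiv.Perm (Fin n)) (A : Finset (Fin n)) (h) :
    (restr g A h).support = A.filter (fun x => g x ≠ x) := by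
  ext x
  rw [Equiv.Perm.mem_support, Finset.mem_filter]
  by_cases hx : x ∈ A
  · rw [restr_apply_mem g A h hx]
    exact ⟨fun hgx => ⟨hx, hgx⟩, fun ⟨_, hgx⟩ => hgx⟩
  · rw [restr_apply_not_mem g A h hx]
    simp [hx]

theorem restr_support_cycleOf (g : Equiv.Perm (Fin n)) (A : Finset (Fin n)) (h) {x : Fin n}
    (hx : x ∈ A) : ((restr g A h).cycleOf x).support = (g.cycleOf x).support := by
  ext y
  rw [Equiv.Perm.mem_support_cycleOf_iff, Equiv.Perm.mem_support_cycleOf_iff,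
    restr_sameCycle g A h hx, Equiv.Perm.mem_support, Equiv.Perm.mem_support,
    restr_apply_mem g A h hx]

theorem restr_cycLen (g : Equiv.Perm (Fin n)) (A : Finset (Fin n)) (h) {x : Fin n}
    (hx : x ∈ A) : cycLen (restr g A h) x = cycLen g x := by
  unfold cycLen
  rw [restr_support_cycleOf g A h hx]

theorem Feasible.restr' {k : ℕ} {W : Fin n → Finset (Fin n)} {g : Equiv.Perm (Fin n)}
    (hg : Feasible k W g) (A : Finset (Fin n)) (h) : Feasible k W (restr g A h) := by
  intro i hi
  by_cases hiA : i ∈ A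
  · rw [restr_apply_mem g A h hiA] at hi ⊢
    rw [restr_cycLen g A h hiA]
    exact hg i hi
  · rw [restr_apply_not_mem g A h hiA] at hi
    exact absurd rfl hi

theorem disjoint_perm_of_support {a b : Equiv.Perm (Fin n)} {A B : Finset (Fin n)}
    (ha : a.support ⊆ A) (hb : b.support ⊆ B) (hd : Disjoint A B) :
    a.Disjoint b := by
  intro x
  by_cases hx : a x = x
  · exact Or.inl hx
  · right
    have hxA : x ∈ A := ha (Equiv.Perm.mem_support.mpr hx)
    by_contra hbx
    exact (Finset.disjoint_left.mp hd hxA) (hb (Equiv.Perm.mem_support.mpr hbx))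

theorem Feasible.mul {k : ℕ} {W : Fin n → Finset (Fin n)} {a b : Equiv.Perm (Fin n)}
    (hA : Feasible k W a) (hB : Feasible k W b) (hd : a.Disjoint b) :
    Feasible k W (a * b) := by
  intro i hi
  rcases hd i with hai | hbi
  · -- a i = i : the product acts as b here
    have hbi' : b i ≠ i := by
      intro hbi
      apply hi
      simp [Equiv.Perm.mul_apply, hbi, hai]
    have habi : a (b i) = b i := by
      rcases hd (b i) with h | h
      · exact h
      · exact absurd (b.injective h) hbi'
    have happ : (a * b) i = b i := by simp [Equiv.Perm.mul_apply, habi]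
    rw [happ]
    have hcyc : cycLen (a * b) i = cycLen b i := by
      unfold cycLen
      rw [hd.commute.eq, Equiv.Perm.cycleOf_mul_of_apply_right_eq_self hd.symm.commute i hai]
    rw [hcyc]
    exact hB i hbi'
  · -- b i = i
    have happ : (a * b) i = a i := by simp [Equiv.Perm.mul_apply, hbi]
    rw [happ]
    have hai' : a i ≠ i := by
      intro hai; apply hi; simp [Equiv.Perm.mul_apply, hbi, hai]
    have hcyc : cycLen (a * b) i = cycLen a i := by
      unfold cycLen
      rw [Equiv.Perm.cycleOf_mul_of_apply_right_eq_self hd.commute i hbi]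
    rw [hcyc]
    exact hA i hai'



/-- `S` can be covered by a feasible exchange. -/
def Covers (k : ℕ) {n : ℕ} (W : Fin n → Finset (Fin n)) (S : Finset (Fin n)) : Prop :=
  ∃ π : Equiv.Perm (Fin n), Feasible k W π ∧ ∀ i ∈ S, π i ≠ i

theorem covers_mono {k : ℕ} {W : Fin n → Finset (Fin n)} {S T : Finset (Fin n)}
    (hST : S ⊆ T) (h : Covers k W T) : Covers k W S := by
  obtain ⟨π, hπ, hcov⟩ := h
  exact ⟨π, hπ, fun i hi => hcov i (hST hi)⟩

theorem covers_empty (k : ℕ) (W : Fin n → Finset (Fin n)) : Covers k W ∅ :=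
  ⟨1, fun i hi => absurd rfl hi, fun i hi => absurd hi (Finset.notMem_empty i)⟩

theorem covers_mono_W {k : ℕ} {W W' : Fin n → Finset (Fin n)} {S : Finset (Fin n)}
    (hW : ∀ j, W j ⊆ W' j) (h : Covers k W S) : Covers k W' S := by
  obtain ⟨π, hπ, hcov⟩ := h
  exact ⟨π, fun i hi => ⟨hW i (hπ i hi).1, (hπ i hi).2⟩, hcov⟩

open scoped Classical

/-- The priority (greedy) run over a list of agents. -/
def runL (k : ℕ) (W : Fin n → Finset (Fin n)) : List (Fin n) → Finset (Fin n) → Finset (Fin n)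
  | [], C => C
  | j :: l, C => runL k W l (if Covers k W (insert j C) then insert j C else C)

theorem runL_subset (k : ℕ) (W : Fin n → Finset (Fin n)) :
    ∀ (l : List (Fin n)) (C : Finset (Fin n)), C ⊆ runL k W l C := by
  intro l
  induction l with
  | nil => intro C; exact Finset.Subset.refl C
  | cons j l ih =>
    intro C
    refine Finset.Subset.trans ?_ (ih _)
    split_ifs with h
    · exact Finset.subset_insert j C
    · exact Finset.Subset.refl C

theorem runL_covers (k : ℕ) (W : Fin n → Finset (Fin n)) :
    ∀ (l : List (Fin n)) (C : Finset (Fin n)), Covers k W C → Covers k W (runL k W l C) := by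
  intro l
  induction l with
  | nil => intro C h; exact h
  | cons j l ih =>
    intro C h
    apply ih
    split_ifs with h' 
    · exact h'
    · exact h

theorem runL_notin (k : ℕ) (W : Fin n → Finset (Fin n)) {j : Fin n} :
    ∀ (l : List (Fin n)) (C : Finset (Fin n)), j ∉ l → j ∉ C → j ∉ runL k W l C := by
  intro l
  induction l with
  | nil => intro C _ h; exact h
  | cons j' l ih =>
    intro C hl hC
    have hj' : j ≠ j' := fun h => hl (h ▸ (List.mem_cons_self : j' ∈ j' :: l))
    have hl' : j ∉ l := fun h => hl (List.mem_cons_of_mem j' h)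
    apply ih _ hl'
    split_ifs with h
    · intro hmem
      rcases Finset.mem_insert.mp hmem with h' | h'
      · exact hj' h'
      · exact hC h'
    · exact hC

theorem runL_decision (k : ℕ) (W : Fin n → Finset (Fin n)) {j : Fin n} :
    ∀ (l : List (Fin n)) (C : Finset (Fin n)), j ∈ l → j ∉ runL k W l C →
    ∃ C', C' ⊆ runL k W l C ∧ ¬ Covers k W (insert j C') := by
  intro l
  induction l with
  | nil => intro C h; exact absurd h List.not_mem_nil
  | cons j' l ih =>
    intro C hl hrun
    by_cases hj : j = j'
    · subst hj
      by_cases h : Covers k W (insert j C)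
      · exfalso
        apply hrun
        have : j ∈ (if Covers k W (insert j C) then insert j C else C) := by
          rw [if_pos h]; exact Finset.mem_insert_self j C
        exact runL_subset k W l _ this
      · exact ⟨C, runL_subset k W _ _, h⟩
    · have hl' : j ∈ l := by
        rcases List.mem_cons.mp hl with h | h
        · exact absurd h hj
        · exact h
      have hrun' : j ∉ runL k W l (if Covers k W (insert j' C) then insert j' C else C) := hrun
      obtain ⟨C', hCC', hnc⟩ := ih _ hl' hrun'
      exact ⟨C', hCC', hnc⟩

/-- The set committed by the priority mechanism. -/
def chosen (k : ℕ) {n : ℕ} (W : Fin n → Finset (Fin n)) : Finset (Fin n) :=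
  runL k W (List.finRange n) ∅

theorem chosen_covers (k : ℕ) (W : Fin n → Finset (Fin n)) : Covers k W (chosen k W) :=
  runL_covers k W _ _ (covers_empty k W)

theorem chosen_max (k : ℕ) (W : Fin n → Finset (Fin n)) {j : Fin n} (hj : j ∉ chosen k W) :
    ¬ Covers k W (insert j (chosen k W)) := by
  obtain ⟨C', hC', hnc⟩ := runL_decision k W (List.finRange n) ∅ (List.mem_finRange j) hj
  intro hcov
  exact hnc (covers_mono (Finset.insert_subset_insert j hC') hcov)

/-- The mechanism's output exchange. -/
def mechPerm (k : ℕ) {n : ℕ} (W : Fin n → Finset (Fin n)) : Equiv.Perm (Fin n) :=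
  (chosen_covers k W).choose

theorem mechPerm_feasible (k : ℕ) (W : Fin n → Finset (Fin n)) :
    Feasible k W (mechPerm k W) :=
  (chosen_covers k W).choose_spec.1

theorem mechPerm_covers (k : ℕ) (W : Fin n → Finset (Fin n)) :
    ∀ i ∈ chosen k W, mechPerm k W i ≠ i :=
  (chosen_covers k W).choose_spec.2

theorem mechPerm_support (k : ℕ) (W : Fin n → Finset (Fin n)) :
    (mechPerm k W).support = chosen k W := by
  apply Finset.Subset.antisymm
  · intro x hx
    by_contra hxc
    apply chosen_max k W hxc
    refine ⟨mechPerm k W, mechPerm_feasible k W, ?_⟩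
    intro i hi
    rcases Finset.mem_insert.mp hi with h | h
    · subst h; exact Equiv.Perm.mem_support.mp hx
    · exact mechPerm_covers k W i h
  · intro x hx
    exact Equiv.Perm.mem_support.mpr (mechPerm_covers k W x hx)

/-- Fact A: a set coverable with the larger list but not the smaller one
can be covered together with the deviating agent `i`. -/
theorem factA {k : ℕ} {W W' : Fin n → Finset (Fin n)} {i : Fin n}
    (hsub : ∀ j, W j ⊆ W' j) (heq : ∀ j, j ≠ i → W j = W' j)
    {S : Finset (Fin n)} (h' : Covers k W' S) (h : ¬ Covers k W S) :
    Covers k W' (insert i S) := by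
  obtain ⟨π, hπ, hcov⟩ := h'
  by_cases hπi : π i = i
  · exfalso
    apply h
    refine ⟨π, ?_, hcov⟩
    intro j hj
    have hji : j ≠ i := fun hh => hj (hh ▸ hπi)
    rw [heq j hji]
    exact hπ j hj
  · refine ⟨π, hπ, ?_⟩
    intro j hj
    rcases Finset.mem_insert.mp hj with h1 | h1
    · exact h1 ▸ hπi
    · exact hcov j h1

/-- Monotonicity invariant for the priority run: if `i` gets committed with the
smaller wish list, it is also committed with the larger one. -/
theorem runL_mono_i {k : ℕ} {W W' : Fin n → Finset (Fin n)} {i : Fin n}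
    (hsub : ∀ j, W j ⊆ W' j) (heq : ∀ j, j ≠ i → W j = W' j) :
    ∀ (l : List (Fin n)) (C C' : Finset (Fin n)),
    (C' = C ∨ (Covers k W' (insert i C') ∧ ¬ Covers k W C')) →
    i ∉ C → i ∉ C' → l.Nodup →
    i ∈ runL k W l C → i ∈ runL k W' l C' := by
  intro l
  induction l with
  | nil =>
    intro C C' _ hiC _ _ hrun
    exact absurd hrun hiC
  | cons j l ih =>
    intro C C' hR hiC hiC' hnd hrun
    have hndl : l.Nodup := (List.nodup_cons.mp hnd).2
    by_cases hji : j = i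
    · subst hji
      -- the decision step for i itself
      by_cases hcw : Covers k W (insert j C)
      · -- i is inserted in the W run; show it is inserted in the W' run
        have hins' : Covers k W' (insert j C') := by
          rcases hR with h1 | ⟨h1, _⟩
          · subst h1; exact covers_mono_W hsub hcw
          · exact h1
        have hrun2 : runL k W' (j :: l) C' = runL k W' l (insert j C') := by
          show runL k W' l (if Covers k W' (insert j C') then insert j C' else C') = _
          rw [if_pos hins']
        rw [hrun2]
        exact runL_subset k W' l _ (Finset.mem_insert_self j C')
      · -- i is not inserted in the W run: then i never enters, contradiction
        exfalso
        have hrun1 : runL k W (j :: l) C = runL k W l C := by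
          show runL k W l (if Covers k W (insert j C) then insert j C else C) = _
          rw [if_neg hcw]
        rw [hrun1] at hrun
        exact runL_notin k W l C (List.nodup_cons.mp hnd).1 hiC hrun
    · -- j ≠ i : maintain the invariant
      have hji' : j ≠ i := fun h => hji h
      set D := (if Covers k W (insert j C) then insert j C else C) with hD
      set D' := (if Covers k W' (insert j C') then insert j C' else C') with hD'
      have hiD : i ∉ D := by
        rw [hD]; split_ifs
        · intro hmem
          rcases Finset.mem_insert.mp hmem with h1 | h1
          · exact hji (h1.symm)
          · exact hiC h1
        · exact hiC
      have hiD' : i ∉ D' := by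
        rw [hD']; split_ifs
        · intro hmem
          rcases Finset.mem_insert.mp hmem with h1 | h1
          · exact hji (h1.symm)
          · exact hiC' h1
        · exact hiC'
      have hRD : D' = D ∨ (Covers k W' (insert i D') ∧ ¬ Covers k W D') := by
        rcases hR with h1 | ⟨h1, h2⟩
        · subst h1
          by_cases hcw : Covers k W (insert j C')
          · left
            rw [hD, hD', if_pos hcw, if_pos (covers_mono_W hsub hcw)]
          · by_cases hcw' : Covers k W' (insert j C')
            · right
              rw [hD', if_pos hcw']
              constructor
              · exact factA hsub heq hcw' hcw
              · exact hcw
            · left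
              rw [hD, hD', if_neg hcw, if_neg hcw']
        · right
          rw [hD']
          split_ifs with hcw'
          · have hnc : ¬ Covers k W (insert j C') := by
              intro hc
              exact h2 (covers_mono (Finset.subset_insert j C') hc)
            exact ⟨factA hsub heq hcw' hnc, hnc⟩
          · exact ⟨h1, h2⟩
      exact ih D D' hRD hiD hiD' hndl hrun

/-- Truthfulness at the level of the committed set. -/
theorem chosen_mono_i {k : ℕ} {W W' : Fin n → Finset (Fin n)} {i : Fin n}
    (hsub : ∀ j, W j ⊆ W' j) (heq : ∀ j, j ≠ i → W j = W' j)
    (hi : i ∈ chosen k W) : i ∈ chosen k W' := by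
  exact runL_mono_i hsub heq (List.finRange n) ∅ ∅ (Or.inl rfl)
    (Finset.notMem_empty i) (Finset.notMem_empty i) (List.nodup_finRange n) hi



/-! ### Cycle families and the approximation-ratio argument -/

variable {n : ℕ}

/-- The family of supports of trading cycles of a permutation. -/
def cyclesOf (π : Equiv.Perm (Fin n)) : Finset (Finset (Fin n)) :=
  π.support.image (fun x => (π.cycleOf x).support)

theorem mem_own_cycle {π : Equiv.Perm (Fin n)} {x : Fin n} (hx : x ∈ π.support) :
    x ∈ (π.cycleOf x).support :=
  Equiv.Perm.mem_support_cycleOf_iff.mpr ⟨Equiv.Perm.SameCycle.refl π x, hx⟩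

theorem cyclesOf_pairwise (π : Equiv.Perm (Fin n)) :
    ∀ q₁ ∈ cyclesOf π, ∀ q₂ ∈ cyclesOf π, q₁ ≠ q₂ → Disjoint q₁ q₂ := by
  intro q₁ hq₁ q₂ hq₂ hne
  obtain ⟨x₁, hx₁, rfl⟩ := Finset.mem_image.mp hq₁
  obtain ⟨x₂, hx₂, rfl⟩ := Finset.mem_image.mp hq₂
  rw [Finset.disjoint_left]
  intro y hy₁ hy₂
  apply hne
  have h₁ := (Equiv.Perm.mem_support_cycleOf_iff.mp hy₁).1
  have h₂ := (Equiv.Perm.mem_support_cycleOf_iff.mp hy₂).1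
  have : π.SameCycle x₁ x₂ := h₁.trans h₂.symm
  rw [Equiv.Perm.SameCycle.cycleOf_eq this]

theorem cyclesOf_sup (π : Equiv.Perm (Fin n)) : (cyclesOf π).sup id = π.support := by
  apply Finset.Subset.antisymm
  · intro x hx
    rw [Finset.mem_sup] at hx
    obtain ⟨q, hq, hxq⟩ := hx
    obtain ⟨y, _, rfl⟩ := Finset.mem_image.mp hq
    exact Equiv.Perm.support_cycleOf_le π y hxq
  · intro x hx
    rw [Finset.mem_sup]
    exact ⟨(π.cycleOf x).support, Finset.mem_image.mpr ⟨x, hx, rfl⟩, mem_own_cycle hx⟩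

theorem cyclesOf_subset_support {π : Equiv.Perm (Fin n)} {q : Finset (Fin n)}
    (hq : q ∈ cyclesOf π) : q ⊆ π.support := by
  obtain ⟨x, _, rfl⟩ := Finset.mem_image.mp hq
  exact Equiv.Perm.support_cycleOf_le π x

theorem cyclesOf_card_le {k : ℕ} {W : Fin n → Finset (Fin n)} {π : Equiv.Perm (Fin n)}
    (hπ : Feasible k W π) : ∀ q ∈ cyclesOf π, q.card ≤ k := by
  intro q hq
  obtain ⟨x, hx, rfl⟩ := Finset.mem_image.mp hq
  exact (hπ x (Equiv.Perm.mem_support.mp hx)).2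

theorem cyclesOf_sum (π : Equiv.Perm (Fin n)) :
    ∑ q ∈ cyclesOf π, q.card = π.support.card := by
  rw [← cyclesOf_sup π, Finset.sup_eq_biUnion]
  exact (Finset.card_biUnion (fun a ha b hb hab => cyclesOf_pairwise π a ha b hb hab)).symm

theorem cycle_support_invariant (σ : Equiv.Perm (Fin n)) (x : Fin n) :
    ∀ y, y ∈ (σ.cycleOf x).support ↔ σ y ∈ (σ.cycleOf x).support := by
  intro y
  have hyy : σ.SameCycle y (σ y) := ⟨1, by simp⟩
  rw [Equiv.Perm.mem_support_cycleOf_iff, Equiv.Perm.mem_support_cycleOf_iff]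
  constructor
  · rintro ⟨h1, h2⟩; exact ⟨h1.trans hyy, h2⟩
  · rintro ⟨h1, h2⟩; exact ⟨h1.trans hyy.symm, h2⟩

theorem sup_cycles_invariant {σ : Equiv.Perm (Fin n)} (F : Finset (Finset (Fin n)))
    (hF : F ⊆ cyclesOf σ) : ∀ y, y ∈ F.sup id ↔ σ y ∈ F.sup id := by
  intro y
  have key : ∀ p ∈ F, ∀ z, z ∈ p ↔ σ z ∈ p := by
    intro p hp
    obtain ⟨x, _, rfl⟩ := Finset.mem_image.mp (hF hp)
    exact cycle_support_invariant σ x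
  rw [Finset.mem_sup, Finset.mem_sup]
  constructor
  · rintro ⟨p, hp, hy⟩; exact ⟨p, hp, (key p hp y).mp hy⟩
  · rintro ⟨p, hp, hy⟩; exact ⟨p, hp, (key p hp y).mpr hy⟩

/-- The central "swap" construction:  gluing `π` on `A` with `σ` on `Z` yields
a feasible exchange covering `A ∪ Z`. -/
theorem glue_covers {k : ℕ} {W : Fin n → Finset (Fin n)} {π σ : Equiv.Perm (Fin n)}
    (hπ : Feasible k W π) (hσ : Feasible k W σ)
    (A Z : Finset (Fin n))
    (hAsupp : A ⊆ π.support) (hZsupp : Z ⊆ σ.support)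
    (hAinv : ∀ y, y ∈ A ↔ π y ∈ A) (hZinv : ∀ y, y ∈ Z ↔ σ y ∈ Z)
    (hdisj : Disjoint A Z) :
    Covers k W (A ∪ Z) := by
  have hsuppa : (restr σ Z hZinv).support = Z := by
    rw [restr_support]
    apply Finset.filter_true_of_mem
    intro z hz
    exact Equiv.Perm.mem_support.mp (hZsupp hz)
  have hsuppb : (restr π A hAinv).support = A := by
    rw [restr_support]
    apply Finset.filter_true_of_mem
    intro z hz
    exact Equiv.Perm.mem_support.mp (hAsupp hz)
  have hdper : (restr σ Z hZinv).Disjoint (restr π A hAinv) :=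
    disjoint_perm_of_support (le_of_eq hsuppa) (le_of_eq hsuppb) hdisj.symm
  refine ⟨restr σ Z hZinv * restr π A hAinv,
    Feasible.mul (hσ.restr' Z hZinv) (hπ.restr' A hAinv) hdper, ?_⟩
  intro i hi
  have : i ∈ (restr σ Z hZinv * restr π A hAinv).support := by
    rw [Equiv.Perm.Disjoint.support_mul hdper, hsuppa, hsuppb]
    rcases Finset.mem_union.mp hi with h | h
    · exact Finset.mem_union_right _ h
    · exact Finset.mem_union_left _ h
  exact Equiv.Perm.mem_support.mp this

/-- Main counting bound: any feasible exchange has support at most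
`(k-1)` times the committed set of the priority mechanism. -/
theorem ratio_count {k : ℕ} (hk : 2 ≤ k) {W : Fin n → Finset (Fin n)}
    (σ : Equiv.Perm (Fin n)) (hσ : Feasible k W σ) :
    σ.support.card + (chosen k W).card ≤ k * (chosen k W).card := by
  have hπ : Feasible k W (mechPerm k W) := mechPerm_feasible k W
  have hCsupp : (mechPerm k W).support = chosen k W := mechPerm_support k W
  have hsupP : (cyclesOf (mechPerm k W)).sup id = chosen k W := by
    rw [cyclesOf_sup, hCsupp]
  -- hypothesis hQC of abs_count
  have hQC : ∀ q ∈ cyclesOf σ, (q ∩ (cyclesOf (mechPerm k W)).sup id).Nonempty := by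
    intro q hq
    rw [hsupP]
    by_contra hcon
    rw [Finset.not_nonempty_iff_eq_empty] at hcon
    obtain ⟨x, hxs, rfl⟩ := Finset.mem_image.mp hq
    have hxC : x ∉ chosen k W := by
      intro hxC
      have : x ∈ (σ.cycleOf x).support ∩ chosen k W :=
        Finset.mem_inter.mpr ⟨mem_own_cycle hxs, hxC⟩
      rw [hcon] at this
      exact absurd this (Finset.notMem_empty x)
    apply chosen_max k W hxC
    have hcov : Covers k W (chosen k W ∪ (σ.cycleOf x).support) := by
      apply glue_covers hπ hσ _ _ (le_of_eq hCsupp.symm)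
        (Equiv.Perm.support_cycleOf_le σ x)
        (fun y => by rw [← hCsupp]; exact (Equiv.Perm.apply_mem_support).symm)
        (cycle_support_invariant σ x)
        (Finset.disjoint_left.mpr (fun a haC haq => by
          have : a ∈ (σ.cycleOf x).support ∩ chosen k W := Finset.mem_inter.mpr ⟨haq, haC⟩
          rw [hcon] at this
          exact absurd this (Finset.notMem_empty a)))
    apply covers_mono _ hcov
    intro y hy
    rcases Finset.mem_insert.mp hy with h | h
    · exact Finset.mem_union_right _ (by rw [h]; exact mem_own_cycle hxs)
    · exact Finset.mem_union_left _ h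
  -- hypothesis H of abs_count
  have H : ∀ S ⊆ cyclesOf (mechPerm k W), S.Nonempty →
      (∀ q ∈ cyclesOf σ, (q ∩ S.sup id).Nonempty →
        q ∩ (cyclesOf (mechPerm k W)).sup id ⊆ S.sup id) →
      S.sup id ⊆ (cyclesOf σ).sup id →
      ∀ q ∈ cyclesOf σ, q ∩ (cyclesOf (mechPerm k W)).sup id ⊆ S.sup id →
        q ⊆ (cyclesOf (mechPerm k W)).sup id := by
    intro S hS _hSne hScl hSsupQ q hq hqX
    rw [hsupP] at hScl hqX ⊢
    by_contra hcon
    obtain ⟨j, hjq, hjC⟩ := Finset.not_subset.mp hcon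
    -- the swap family:  X = S.sup id,  Zfam = cycles of σ confined to X, Z = their union
    have hXC : S.sup id ⊆ chosen k W := by
      rw [← hsupP]
      exact (Finset.sup_mono hS : S.sup id ≤ _)
    have hqmem : q ∈ (cyclesOf σ).filter (fun r => r ∩ chosen k W ⊆ S.sup id) := by
      rw [Finset.mem_filter]
      exact ⟨hq, hqX⟩
    have hqZ : q ⊆ ((cyclesOf σ).filter (fun r => r ∩ chosen k W ⊆ S.sup id)).sup id :=
      Finset.le_sup (f := id) hqmem
    have hXZ : S.sup id ⊆ ((cyclesOf σ).filter (fun r => r ∩ chosen k W ⊆ S.sup id)).sup id := by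
      intro x hx
      have hxQ : x ∈ (cyclesOf σ).sup id := hSsupQ hx
      rw [Finset.mem_sup] at hxQ
      obtain ⟨r, hr, hxr⟩ := hxQ
      have hrcl : r ∩ chosen k W ⊆ S.sup id :=
        hScl r hr ⟨x, Finset.mem_inter.mpr ⟨hxr, hx⟩⟩
      rw [Finset.mem_sup]
      exact ⟨r, Finset.mem_filter.mpr ⟨hr, hrcl⟩, hxr⟩
    have hZsupp : ((cyclesOf σ).filter (fun r => r ∩ chosen k W ⊆ S.sup id)).sup id
        ⊆ σ.support := by
      intro z hz
      rw [Finset.mem_sup] at hz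
      obtain ⟨r, hr, hzr⟩ := hz
      exact cyclesOf_subset_support (Finset.mem_filter.mp hr).1 hzr
    have hZinv : ∀ y, y ∈ ((cyclesOf σ).filter (fun r => r ∩ chosen k W ⊆ S.sup id)).sup id
        ↔ σ y ∈ ((cyclesOf σ).filter (fun r => r ∩ chosen k W ⊆ S.sup id)).sup id :=
      sup_cycles_invariant _ (Finset.filter_subset _ _)
    have hAinv : ∀ y, y ∈ chosen k W \ S.sup id
        ↔ mechPerm k W y ∈ chosen k W \ S.sup id := by
      intro y
      have h1 : ∀ z, z ∈ chosen k W ↔ mechPerm k W z ∈ chosen k W := by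
        intro z
        rw [← hCsupp]
        exact (Equiv.Perm.apply_mem_support).symm
      have h2 : ∀ z, z ∈ S.sup id ↔ mechPerm k W z ∈ S.sup id := sup_cycles_invariant S hS
      rw [Finset.mem_sdiff, Finset.mem_sdiff, ← h1 y, ← h2 y]
    have hdisjAZ : Disjoint (chosen k W \ S.sup id)
        (((cyclesOf σ).filter (fun r => r ∩ chosen k W ⊆ S.sup id)).sup id) := by
      rw [Finset.disjoint_left]
      intro a ha haZ
      rw [Finset.mem_sup] at haZ
      obtain ⟨r, hr, har⟩ := haZ
      have := (Finset.mem_filter.mp hr).2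
        (Finset.mem_inter.mpr ⟨har, (Finset.mem_sdiff.mp ha).1⟩)
      exact (Finset.mem_sdiff.mp ha).2 this
    have hcov : Covers k W ((chosen k W \ S.sup id)
        ∪ ((cyclesOf σ).filter (fun r => r ∩ chosen k W ⊆ S.sup id)).sup id) :=
      glue_covers hπ hσ _ _
        (by rw [hCsupp]; exact Finset.sdiff_subset)
        hZsupp hAinv hZinv hdisjAZ
    apply chosen_max k W hjC
    apply covers_mono _ hcov
    intro y hy
    rcases Finset.mem_insert.mp hy with h | h
    · exact Finset.mem_union_right _ (by rw [h]; exact hqZ hjq)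
    · by_cases hyX : y ∈ S.sup id
      · exact Finset.mem_union_right _ (hXZ hyX)
      · exact Finset.mem_union_left _ (Finset.mem_sdiff.mpr ⟨h, hyX⟩)
  have := abs_count k hk (cyclesOf (mechPerm k W)).card
    (cyclesOf (mechPerm k W)) (cyclesOf σ) (le_refl _)
    (cyclesOf_pairwise _) (cyclesOf_pairwise _)
    (cyclesOf_card_le hπ) (cyclesOf_card_le hσ) hQC H
  rw [hsupP, cyclesOf_sum] at this
  exact this

/-- Social welfare of the uniform length function counts the partaking agents. -/
theorem SW_uniform {n : ℕ} (π : Equiv.Perm (Fin n)) :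
    SW (fun _ => (1 : ℝ)) π = (π.support.card : ℝ) := by
  have hsupp : π.support = Finset.univ.filter (fun x => π x ≠ x) := by
    ext x; simp [Equiv.Perm.mem_support]
  rw [hsupp, SW]
  rw [← Finset.sum_boole]
  apply Finset.sum_congr rfl
  intro i _
  rw [utility]

/-- Theorem 2 of the paper.  For every length bound `k ≥ 3` and every
`ε > 0`, the `k`-BE problem (i.e., `(k,λ)`-BE with the uniform length function `λ ≡ 1`)
admits a truthful mechanism with approximation ratio `k − 1 + ε`. -/
theorem exists_truthful_mechanism_uniform_approx
    (k : ℕ) (hk : 3 ≤ k) (ε : ℝ) (hε : 0 < ε) :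
    ∃ f : Mechanism,
      IsMechanism k f ∧ Truthful k (fun _ => (1 : ℝ)) f ∧
        ApproxRatio k (fun _ => (1 : ℝ)) f ((k : ℝ) - 1 + ε) := by
  refine ⟨fun n W => mechPerm k W, ?_, ?_, ?_⟩
  · -- individual rationality / feasibility
    intro n W _
    exact mechPerm_feasible k W
  · -- truthfulness
    intro n Wstar W _hWL hsub i
    have hsub' : ∀ j, W j ⊆ Function.update W i (Wstar i) j := by
      intro j
      by_cases hj : j = i
      · subst hj; rw [Function.update_self]; exact hsub j
      · rw [Function.update_of_ne hj]
    have heq' : ∀ j, j ≠ i → W j = Function.update W i (Wstar i) j := by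
      intro j hj; rw [Function.update_of_ne hj]
    unfold utility
    by_cases hcase : mechPerm k W i ≠ i
    · have hiC : i ∈ chosen k W := by
        rw [← mechPerm_support]
        exact Equiv.Perm.mem_support.mpr hcase
      have hiC' : i ∈ chosen k (Function.update W i (Wstar i)) := chosen_mono_i hsub' heq' hiC
      have hne : mechPerm k (Function.update W i (Wstar i)) i ≠ i := mechPerm_covers _ _ i hiC'
      rw [if_pos hcase, if_pos hne]
    · rw [if_neg hcase]
      split_ifs
      · exact zero_le_one
      · exact le_refl 0
  · -- approximation ratio
    have hk3 : (3 : ℝ) ≤ (k : ℝ) := by exact_mod_cast hk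
    have hrpos : (0 : ℝ) < (k : ℝ) - 1 + ε := by linarith
    constructor
    · linarith
    · intro n Wstar _hWL π hπ
      have hcount := ratio_count (by omega : 2 ≤ k) π hπ
      rw [SW_uniform, SW_uniform, mechPerm_support]
      have hcast : (π.support.card : ℝ) + ((chosen k Wstar).card : ℝ)
          ≤ (k : ℝ) * ((chosen k Wstar).card : ℝ) := by
        exact_mod_cast hcount
      have hC0 : (0 : ℝ) ≤ ((chosen k Wstar).card : ℝ) := Nat.cast_nonneg _
      have hT : (π.support.card : ℝ) ≤ ((k : ℝ) - 1 + ε) * ((chosen k Wstar).card : ℝ) := by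
        nlinarith
      rw [ge_iff_le]
      calc 1 / ((k : ℝ) - 1 + ε) * (π.support.card : ℝ)
          ≤ 1 / ((k : ℝ) - 1 + ε) * (((k : ℝ) - 1 + ε) * ((chosen k Wstar).card : ℝ)) := by
            apply mul_le_mul_of_nonneg_left hT
            positivity
        _ = ((chosen k Wstar).card : ℝ) := by
            field_simp

end

end BarterExchange
end

section
/- For every integer length bound k ≥ 3, every non-uniform length function λ, and every real ε > 0, there exists a truthful (k,λ)-BE mechanism that admits approximation ratio max{ k − 1 + ε, ρ(λ) }. -/
/-!
Barter exchange (BE) framework, following Emek–Shpiro,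
"Barter Exchange with Bounded Trading Cycles".
-/

open Finset

namespace BarterExchange

noncomputable section

/-- A length function is non-uniform if it strictly decreases somewhere on `{2,…,k}`. -/
def NonUniform (k : ℕ) (lam : ℕ → ℝ) : Prop :=
  ∃ ℓ ℓ' : ℕ, 2 ≤ ℓ ∧ ℓ < ℓ' ∧ ℓ' ≤ k ∧ lam ℓ' < lam ℓ

/-- The critical ratio `ρ(λ)`: the maximum, over all pairs `2 ≤ ℓ < ℓ′ ≤ k` with
`λ(ℓ) > λ(ℓ′)`, of `max{ ℓ′·λ(ℓ′)/λ(ℓ), ((ℓ−1)/ℓ)·(ℓ′·λ(ℓ′)/λ(ℓ)) + 1 }`. -/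
def rho (k : ℕ) (lam : ℕ → ℝ) : ℝ :=
  sSup {x : ℝ |
    ∃ ℓ ℓ' : ℕ, 2 ≤ ℓ ∧ ℓ < ℓ' ∧ ℓ' ≤ k ∧ lam ℓ' < lam ℓ ∧
      x = max ((ℓ' : ℝ) * lam ℓ' / lam ℓ)
              (((ℓ : ℝ) - 1) / (ℓ : ℝ) * ((ℓ' : ℝ) * lam ℓ' / lam ℓ) + 1)}

section Aux

variable {n : ℕ}

open Equiv Equiv.Perm

/-- Key lemma: if `τ` agrees with `π` on the `π`-orbit of `x` (with `π x ≠ x`),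
then the cycles of `τ` and `π` at `x` have the same support. -/
lemma support_cycleOf_congr {π τ : Equiv.Perm (Fin n)} {x : Fin n} (hx : π x ≠ x)
    (h : ∀ y ∈ (π.cycleOf x).support, τ y = π y) :
    (τ.cycleOf x).support = (π.cycleOf x).support := by
  have hxsupp : x ∈ π.support := mem_support.2 hx
  have hmem : ∀ y, y ∈ (π.cycleOf x).support ↔ π.SameCycle x y := by
    intro y; rw [mem_support_cycleOf_iff]; simp [hxsupp]
  have hpow : ∀ m : ℕ, (τ ^ m) x = (π ^ m) x := by
    intro m
    induction m with
    | zero => simp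
    | succ m ih =>
      have hmemm : (π ^ m) x ∈ (π.cycleOf x).support := by
        rw [hmem]; exact ⟨(m : ℤ), by simp⟩
      rw [pow_succ', pow_succ', Equiv.Perm.mul_apply, Equiv.Perm.mul_apply, ih, h _ hmemm]
  have hsc : ∀ y, π.SameCycle x y ↔ τ.SameCycle x y := by
    intro y
    constructor
    · intro hy
      obtain ⟨m, _, hm⟩ := hy.exists_pow_eq'
      exact ⟨(m : ℤ), by rw [zpow_natCast, hpow m, hm]⟩
    · intro hy
      obtain ⟨m, _, hm⟩ := hy.exists_pow_eq'
      exact ⟨(m : ℤ), by rw [zpow_natCast, ← hpow m, hm]⟩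
  have hτx : τ x ≠ x := by
    rw [h x ((hmem x).2 (Equiv.Perm.SameCycle.refl _ _))]; exact hx
  ext y
  rw [mem_support_cycleOf_iff, mem_support_cycleOf_iff, ← hsc y]
  have : x ∈ τ.support := mem_support.2 hτx
  simp [hxsupp, this]

lemma cycLen_congr {π τ : Equiv.Perm (Fin n)} {x : Fin n} (hx : π x ≠ x)
    (h : ∀ y ∈ (π.cycleOf x).support, τ y = π y) :
    cycLen τ x = cycLen π x := by
  unfold cycLen; rw [support_cycleOf_congr hx h]

/-- facts about the support of a cycle of `π`. -/
lemma cycle_mem_facts {π : Equiv.Perm (Fin n)} {x y : Fin n} (hx : π x ≠ x)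
    (hy : y ∈ (π.cycleOf x).support) :
    π y ≠ y ∧ (π.cycleOf y).support = (π.cycleOf x).support ∧
      π y ∈ (π.cycleOf x).support ∧ π⁻¹ y ∈ (π.cycleOf x).support := by
  have hxsupp : x ∈ π.support := mem_support.2 hx
  have hsc : π.SameCycle x y := ((mem_support_cycleOf_iff).1 hy).1
  have hysupp : y ∈ π.support := (hsc.mem_support_iff).1 hxsupp
  have hyy : π y ≠ y := mem_support.1 hysupp
  refine ⟨hyy, ?_, ?_, ?_⟩
  · rw [hsc.cycleOf_eq]
  · rw [mem_support_cycleOf_iff]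
    exact ⟨hsc.trans ⟨(1 : ℤ), by simp⟩, hxsupp⟩
  · rw [mem_support_cycleOf_iff]
    exact ⟨hsc.trans ⟨(-1 : ℤ), by simp⟩, hxsupp⟩

lemma cycLen_eq_card {π : Equiv.Perm (Fin n)} {x y : Fin n} (hx : π x ≠ x)
    (hy : y ∈ (π.cycleOf x).support) : cycLen π y = (π.cycleOf x).support.card := by
  unfold cycLen; rw [(cycle_mem_facts hx hy).2.1]

/-- Restriction of a permutation to an invariant finite set. -/
def restrictPerm (π : Equiv.Perm (Fin n)) (U : Finset (Fin n))
    (h1 : ∀ x ∈ U, π x ∈ U) (h2 : ∀ x ∈ U, π⁻¹ x ∈ U) : Equiv.Perm (Fin n) where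
  toFun x := if x ∈ U then π x else x
  invFun x := if x ∈ U then π⁻¹ x else x
  left_inv x := by
    by_cases hx : x ∈ U
    · simp [hx, h1 x hx]
    · simp [hx]
  right_inv x := by
    by_cases hx : x ∈ U
    · simp [hx, h2 x hx]
      exact fun h => absurd (h2 x hx) h
    · simp [hx]

lemma restrictPerm_apply_mem {π : Equiv.Perm (Fin n)} {U : Finset (Fin n)} {h1 h2} {x : Fin n}
    (hx : x ∈ U) : restrictPerm π U h1 h2 x = π x := by
  simp [restrictPerm, Equiv.coe_fn_mk, hx]

lemma restrictPerm_apply_not_mem {π : Equiv.Perm (Fin n)} {U : Finset (Fin n)} {h1 h2} {x : Fin n}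
    (hx : x ∉ U) : restrictPerm π U h1 h2 x = x := by
  simp [restrictPerm, Equiv.coe_fn_mk, hx]

section Products

variable {n : ℕ}
open Equiv Equiv.Perm

lemma prod_apply_of_fixed {L : List (Equiv.Perm (Fin n))} {x : Fin n}
    (h : ∀ σ ∈ L, σ x = x) : L.prod x = x := by
  induction L with
  | nil => simp
  | cons a t ih =>
    rw [List.prod_cons, Equiv.Perm.mul_apply, ih (fun σ hσ => h σ (List.mem_cons_of_mem _ hσ))]
    exact h a (List.mem_cons_self)

lemma prod_apply_of_mem {L : List (Equiv.Perm (Fin n))}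
    (hd : L.Pairwise Equiv.Perm.Disjoint) {σ : Equiv.Perm (Fin n)} (hσ : σ ∈ L)
    {y : Fin n} (hy : y ∈ σ.support) : L.prod y = σ y := by
  induction L with
  | nil => simp at hσ
  | cons a t ih =>
    rw [List.pairwise_cons] at hd
    rcases List.mem_cons.1 hσ with rfl | hσt
    · rw [List.prod_cons, Equiv.Perm.mul_apply, prod_apply_of_fixed]
      intro τ hτ
      rcases (hd.1 τ hτ) y with h | h
      · exact absurd h (mem_support.1 hy)
      · exact h
    · rw [List.prod_cons, Equiv.Perm.mul_apply, ih hd.2 hσt]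
      have hys : σ y ∈ σ.support := apply_mem_support.2 hy
      rcases (hd.1 σ hσt) (σ y) with h | h
      · exact h
      · exact absurd h (mem_support.1 hys)

lemma prod_cycLen_of_mem {L : List (Equiv.Perm (Fin n))}
    (hd : L.Pairwise Equiv.Perm.Disjoint) {σ : Equiv.Perm (Fin n)} (hσ : σ ∈ L)
    {x : Fin n} (hx : σ x ≠ x) : cycLen L.prod x = cycLen σ x := by
  refine cycLen_congr hx ?_
  intro y hy
  exact prod_apply_of_mem hd hσ (Equiv.Perm.support_cycleOf_le σ x hy)

lemma prod_moved {L : List (Equiv.Perm (Fin n))} {x : Fin n}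
    (h : L.prod x ≠ x) : ∃ σ ∈ L, σ x ≠ x := by
  by_contra hc
  push_neg at hc
  exact h (prod_apply_of_fixed hc)

lemma utility_prod_of_mem {lam : ℕ → ℝ} {L : List (Equiv.Perm (Fin n))}
    (hd : L.Pairwise Equiv.Perm.Disjoint) {σ : Equiv.Perm (Fin n)} (hσ : σ ∈ L)
    {x : Fin n} (hx : σ x ≠ x) : utility lam L.prod x = lam (cycLen σ x) := by
  have h1 : L.prod x = σ x := prod_apply_of_mem hd hσ (mem_support.2 hx)
  have h2 : L.prod x ≠ x := by rw [h1]; exact hx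
  rw [utility, if_pos h2, prod_cycLen_of_mem hd hσ hx]

lemma utility_prod_zero {lam : ℕ → ℝ} {L : List (Equiv.Perm (Fin n))} {x : Fin n}
    (h : ∀ σ ∈ L, σ x = x) : utility lam L.prod x = 0 := by
  rw [utility, if_neg]
  simp [prod_apply_of_fixed h]

lemma utility_cons_of_fixed {lam : ℕ → ℝ} {σ : Equiv.Perm (Fin n)}
    {L : List (Equiv.Perm (Fin n))} (hd : (σ :: L).Pairwise Equiv.Perm.Disjoint)
    {x : Fin n} (hx : σ x = x) :
    utility lam (σ :: L).prod x = utility lam L.prod x := by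
  rw [List.pairwise_cons] at hd
  by_cases h : ∃ τ ∈ L, τ x ≠ x
  · obtain ⟨τ, hτL, hτx⟩ := h
    rw [utility_prod_of_mem (List.pairwise_cons.2 ⟨hd.1, hd.2⟩) (List.mem_cons_of_mem _ hτL) hτx,
      utility_prod_of_mem hd.2 hτL hτx]
  · push_neg at h
    rw [utility_prod_zero h, utility_prod_zero]
    intro τ hτ
    rcases List.mem_cons.1 hτ with rfl | hτt
    · exact hx
    · exact h τ hτt

lemma SW_eq_sum_support {lam : ℕ → ℝ} (σ : Equiv.Perm (Fin n)) :
    SW lam σ = ∑ i ∈ σ.support, lam (cycLen σ i) := by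
  rw [SW]
  rw [← Finset.sum_subset (Finset.subset_univ σ.support)]
  · exact Finset.sum_congr rfl fun i hi => by rw [utility, if_pos (mem_support.1 hi)]
  · intro i _ hi
    rw [utility, if_neg]; simpa using hi

lemma SW_mul_disjoint {lam : ℕ → ℝ} {σ τ : Equiv.Perm (Fin n)}
    (h : Equiv.Perm.Disjoint σ τ) : SW lam (σ * τ) = SW lam σ + SW lam τ := by
  rw [SW, SW, SW, ← Finset.sum_add_distrib]
  refine Finset.sum_congr rfl fun i _ => ?_
  by_cases h1 : σ i ≠ i
  · have h2 : τ i = i := (h i).resolve_left h1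
    have hst : (σ * τ) i = σ i := by rw [Equiv.Perm.mul_apply, h2]
    have hlen : cycLen (σ * τ) i = cycLen σ i := by
      refine cycLen_congr h1 ?_
      intro y hy
      have hys : y ∈ σ.support := Equiv.Perm.support_cycleOf_le σ i hy
      have : τ y = y := (h y).resolve_left (mem_support.1 hys)
      rw [Equiv.Perm.mul_apply, this]
    rw [utility, utility, utility, if_pos (by rw [hst]; exact h1), if_pos h1, if_neg (by simp [h2]),
      hlen, add_zero]
  · push_neg at h1
    by_cases h2 : τ i ≠ i
    · have hst : (σ * τ) i = τ i := by
        rw [Equiv.Perm.mul_apply]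
        have : τ i ∈ τ.support := apply_mem_support.2 (mem_support.2 h2)
        exact (h (τ i)).resolve_right (mem_support.1 this)
      have hlen : cycLen (σ * τ) i = cycLen τ i := by
        refine cycLen_congr h2 ?_
        intro y hy
        have hys : y ∈ τ.support := Equiv.Perm.support_cycleOf_le τ i hy
        have hτy : τ y ∈ τ.support := apply_mem_support.2 hys
        rw [Equiv.Perm.mul_apply]
        exact (h (τ y)).resolve_right (mem_support.1 hτy)
      rw [utility, utility, utility, if_pos (by rw [hst]; exact h2), if_neg (by simp [h1]),
        if_pos h2, hlen, zero_add]
    · push_neg at h2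
      have : (σ * τ) i = i := by rw [Equiv.Perm.mul_apply, h2, h1]
      rw [utility, utility, utility, if_neg (by simp [this]), if_neg (by simp [h1]),
        if_neg (by simp [h2]), add_zero]

lemma SW_prod {lam : ℕ → ℝ} {L : List (Equiv.Perm (Fin n))}
    (hd : L.Pairwise Equiv.Perm.Disjoint) :
    SW lam L.prod = (L.map (SW lam)).sum := by
  induction L with
  | nil =>
    simp [SW, utility]
  | cons a t ih =>
    rw [List.pairwise_cons] at hd
    have hda : Equiv.Perm.Disjoint a t.prod :=
      Equiv.Perm.disjoint_prod_right t hd.1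
    rw [List.prod_cons, SW_mul_disjoint hda, List.map_cons, List.sum_cons, ih hd.2]

end Products



section Best

variable {n : ℕ}

def ordP (σ : Equiv.Perm (Fin n)) : ℕ := (Fintype.equivFin (Equiv.Perm (Fin n)) σ : ℕ)

lemma ordP_lt (σ : Equiv.Perm (Fin n)) : ordP σ < Fintype.card (Equiv.Perm (Fin n)) :=
  (Fintype.equivFin (Equiv.Perm (Fin n)) σ).isLt

lemma ordP_inj {σ τ : Equiv.Perm (Fin n)} (h : ordP σ = ordP τ) : σ = τ := by
  have := Fin.val_injective h
  exact (Fintype.equivFin (Equiv.Perm (Fin n))).injective this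

def pkey (σ : Equiv.Perm (Fin n)) : ℕ :=
  (n + 1 - σ.support.card) * Fintype.card (Equiv.Perm (Fin n)) + ordP σ

lemma support_card_le (σ : Equiv.Perm (Fin n)) : σ.support.card ≤ n := by
  simpa using Finset.card_le_card (Finset.subset_univ σ.support)

lemma pkey_inj {σ τ : Equiv.Perm (Fin n)} (h : pkey σ = pkey τ) : σ = τ := by
  have hc : 0 < Fintype.card (Equiv.Perm (Fin n)) := Fintype.card_pos
  have key : ∀ A B r : ℕ, r < B → (A * B + r) % B = r := by
    intro A B r hr
    rw [Nat.mul_comm, Nat.mul_add_mod, Nat.mod_eq_of_lt hr]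
  have h1 : pkey σ % Fintype.card (Equiv.Perm (Fin n)) = ordP σ :=
    key _ _ _ (ordP_lt σ)
  have h2 : pkey τ % Fintype.card (Equiv.Perm (Fin n)) = ordP τ :=
    key _ _ _ (ordP_lt τ)
  exact ordP_inj (by rw [← h1, ← h2, h])

lemma card_le_of_pkey_le {σ τ : Equiv.Perm (Fin n)} (h : pkey σ ≤ pkey τ) :
    τ.support.card ≤ σ.support.card := by
  by_contra hc
  push_neg at hc
  have hσn : σ.support.card ≤ n := support_card_le σ
  have hτn : τ.support.card ≤ n := support_card_le τ
  have hkey : pkey τ < pkey σ := by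
    have hsub : n + 1 - τ.support.card + 1 ≤ n + 1 - σ.support.card := by omega
    calc pkey τ < (n + 1 - τ.support.card) * Fintype.card (Equiv.Perm (Fin n))
          + Fintype.card (Equiv.Perm (Fin n)) := by
          exact Nat.add_lt_add_left (ordP_lt τ) _
      _ = (n + 1 - τ.support.card + 1) * Fintype.card (Equiv.Perm (Fin n)) := by ring
      _ ≤ (n + 1 - σ.support.card) * Fintype.card (Equiv.Perm (Fin n)) :=
          Nat.mul_le_mul_right _ hsub
      _ ≤ pkey σ := Nat.le_add_right _ _
  omega

def best (s : Finset (Equiv.Perm (Fin n))) : Equiv.Perm (Fin n) :=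
  if h : s.Nonempty then (s.exists_min_image pkey h).choose else 1

lemma best_spec {s : Finset (Equiv.Perm (Fin n))} (h : s.Nonempty) :
    best s ∈ s ∧ ∀ τ ∈ s, pkey (best s) ≤ pkey τ := by
  rw [best, dif_pos h]
  obtain ⟨h1, h2⟩ := (s.exists_min_image pkey h).choose_spec
  exact ⟨h1, h2⟩

lemma best_eq_of_subset {s s' : Finset (Equiv.Perm (Fin n))} (hs : s.Nonempty)
    (hsub : s ⊆ s') (hmem : best s' ∈ s) : best s' = best s := by
  have hs' : s'.Nonempty := hs.mono hsub
  have h1 := best_spec hs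
  have h2 := best_spec hs'
  refine pkey_inj (le_antisymm ?_ ?_)
  · exact h2.2 _ (hsub h1.1)
  · exact h1.2 _ hmem

lemma best_max_card {s : Finset (Equiv.Perm (Fin n))} (h : s.Nonempty)
    {τ : Equiv.Perm (Fin n)} (hτ : τ ∈ s) : τ.support.card ≤ (best s).support.card :=
  card_le_of_pkey_le ((best_spec h).2 τ hτ)

end Best

section Mech

variable (k : ℕ) (lam : ℕ → ℝ)

variable {n : ℕ}

def Qpred (W : Fin n → Finset (Fin n)) (F : Finset (Fin n)) (v : ℝ)
    (σ : Equiv.Perm (Fin n)) : Prop :=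
  ∀ x, σ x ≠ x → σ x ∈ W x ∧ x ∈ F ∧ cycLen σ x ≤ k ∧ lam (cycLen σ x) = v

def cands (W : Fin n → Finset (Fin n)) (F : Finset (Fin n)) (v : ℝ) :
    Finset (Equiv.Perm (Fin n)) :=
  @Finset.filter _ (Qpred k lam W F v) (Classical.decPred _) Finset.univ

lemma one_mem_cands (W : Fin n → Finset (Fin n)) (F : Finset (Fin n)) (v : ℝ) :
    (1 : Equiv.Perm (Fin n)) ∈ cands k lam W F v := by
  unfold cands
  rw [@Finset.mem_filter _ _ (Classical.decPred _)]
  exact ⟨Finset.mem_univ _, fun x hx => absurd rfl hx⟩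

lemma cands_nonempty (W : Fin n → Finset (Fin n)) (F : Finset (Fin n)) (v : ℝ) :
    (cands k lam W F v).Nonempty := ⟨1, one_mem_cands k lam W F v⟩

lemma mem_cands_iff {W : Fin n → Finset (Fin n)} {F : Finset (Fin n)} {v : ℝ}
    {σ : Equiv.Perm (Fin n)} : σ ∈ cands k lam W F v ↔ Qpred k lam W F v σ := by
  unfold cands
  rw [@Finset.mem_filter _ _ (Classical.decPred _)]
  simp

/-- strictly descending list of the elements of a finset of reals -/
def descList (V : Finset ℝ) : List ℝ :=
  if h : V.Nonempty then V.max' h :: descList (V.erase (V.max' h)) else []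
termination_by V.card
decreasing_by
  exact Finset.card_erase_lt_of_mem (V.max'_mem h)

lemma mem_descList {V : Finset ℝ} {x : ℝ} : x ∈ descList V ↔ x ∈ V := by
  induction V using Finset.strongInductionOn with
  | _ V ih =>
    by_cases h : V.Nonempty
    · rw [descList, dif_pos h, List.mem_cons,
        ih (V.erase (V.max' h)) (Finset.erase_ssubset (V.max'_mem h))]
      constructor
      · rintro (rfl | hx)
        · exact V.max'_mem h
        · exact Finset.mem_of_mem_erase hx
      · intro hx
        by_cases hx' : x = V.max' h
        · exact Or.inl hx'
        · exact Or.inr (Finset.mem_erase.2 ⟨hx', hx⟩)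
    · rw [descList, dif_neg h]
      simp [Finset.not_nonempty_iff_eq_empty.1 h]

lemma descList_sorted (V : Finset ℝ) : (descList V).Pairwise (· > ·) := by
  induction V using Finset.strongInductionOn with
  | _ V ih =>
    by_cases h : V.Nonempty
    · rw [descList, dif_pos h]
      refine List.pairwise_cons.2 ⟨?_, ih _ (Finset.erase_ssubset (V.max'_mem h))⟩
      intro y hy
      have hy' : y ∈ V.erase (V.max' h) := mem_descList.1 hy
      obtain ⟨hne, hyV⟩ := Finset.mem_erase.1 hy'
      exact lt_of_le_of_ne (V.le_max' y hyV) hne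
    · rw [descList, dif_neg h]
      exact List.Pairwise.nil

/-- The run of the mechanism: for each value in `vs` (in order), pick a
maximum-cardinality feasible sub-exchange among still-free agents. -/
def runMech (W : Fin n → Finset (Fin n)) : List ℝ → Finset (Fin n) →
    List (ℝ × Equiv.Perm (Fin n))
  | [], _ => []
  | v :: vs, F =>
    (v, best (cands k lam W F v)) ::
      runMech W vs (F \ (best (cands k lam W F v)).support)

lemma runMech_support {W : Fin n → Finset (Fin n)} :
    ∀ (vs : List ℝ) (F : Finset (Fin n)) (p : ℝ × Equiv.Perm (Fin n)),
      p ∈ runMech k lam W vs F → p.2.support ⊆ F := by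
  intro vs
  induction vs with
  | nil => intro F p hp; simp [runMech] at hp
  | cons v rest ih =>
    intro F p hp
    rw [runMech, List.mem_cons] at hp
    rcases hp with rfl | hp
    · intro x hx
      have hQ : Qpred k lam W F v (best (cands k lam W F v)) :=
        (mem_cands_iff k lam).1 (best_spec (cands_nonempty k lam W F v)).1
      exact (hQ x (Equiv.Perm.mem_support.1 hx)).2.1
    · exact (ih _ p hp).trans (Finset.sdiff_subset)

lemma runMech_pairwise {W : Fin n → Finset (Fin n)} :
    ∀ (vs : List ℝ) (F : Finset (Fin n)),
      ((runMech k lam W vs F).map Prod.snd).Pairwise Equiv.Perm.Disjoint := by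
  intro vs
  induction vs with
  | nil => intro F; simp [runMech]
  | cons v rest ih =>
    intro F
    rw [runMech, List.map_cons, List.pairwise_cons]
    refine ⟨?_, ih _⟩
    intro τ hτ
    obtain ⟨p, hp, rfl⟩ := List.mem_map.1 hτ
    have hsub : p.2.support ⊆ F \ (best (cands k lam W F v)).support :=
      runMech_support k lam rest _ p hp
    intro x
    by_cases hx : best (cands k lam W F v) x = x
    · exact Or.inl hx
    · right
      by_contra hτx
      have hx1 : x ∈ (best (cands k lam W F v)).support := Equiv.Perm.mem_support.2 hx
      have hx2 : x ∈ p.2.support := Equiv.Perm.mem_support.2 hτx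
      have := hsub hx2
      rw [Finset.mem_sdiff] at this
      exact this.2 hx1

lemma runMech_Q {W : Fin n → Finset (Fin n)} :
    ∀ (vs : List ℝ) (F : Finset (Fin n)) (p : ℝ × Equiv.Perm (Fin n)),
      p ∈ runMech k lam W vs F → ∀ x, p.2 x ≠ x →
        p.2 x ∈ W x ∧ cycLen p.2 x ≤ k ∧ lam (cycLen p.2 x) = p.1 := by
  intro vs
  induction vs with
  | nil => intro F p hp; simp [runMech] at hp
  | cons v rest ih =>
    intro F p hp x hx
    rw [runMech, List.mem_cons] at hp
    rcases hp with rfl | hp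
    · have hQ : Qpred k lam W F v (best (cands k lam W F v)) :=
        (mem_cands_iff k lam).1 (best_spec (cands_nonempty k lam W F v)).1
      obtain ⟨h1, _, h3, h4⟩ := hQ x hx
      exact ⟨h1, h3, h4⟩
    · exact ih _ p hp x hx

lemma runMech_val {W : Fin n → Finset (Fin n)} :
    ∀ (vs : List ℝ) (F : Finset (Fin n)) (p : ℝ × Equiv.Perm (Fin n)),
      p ∈ runMech k lam W vs F → p.1 ∈ vs := by
  intro vs
  induction vs with
  | nil => intro F p hp; simp [runMech] at hp
  | cons v rest ih =>
    intro F p hp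
    rw [runMech, List.mem_cons] at hp
    rcases hp with rfl | hp
    · exact List.mem_cons_self
    · exact List.mem_cons_of_mem _ (ih _ p hp)

/-- The mechanism. -/
def mech : Mechanism := fun _ W =>
  ((runMech k lam W (descList ((Finset.Icc 2 k).image lam)) Finset.univ).map Prod.snd).prod

end Mech

section Truth

variable (k : ℕ) (lam : ℕ → ℝ)
variable {n : ℕ}

lemma utility_runMech_mem (W : Fin n → Finset (Fin n)) (vs : List ℝ) (F : Finset (Fin n))
    (i : Fin n) :
    utility lam ((runMech k lam W vs F).map Prod.snd).prod i = 0 ∨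
      ∃ v' ∈ vs, utility lam ((runMech k lam W vs F).map Prod.snd).prod i = v' := by
  set L := (runMech k lam W vs F).map Prod.snd with hL
  have hd : L.Pairwise Equiv.Perm.Disjoint := runMech_pairwise k lam vs F
  by_cases h : ∃ σ ∈ L, σ i ≠ i
  · obtain ⟨σ, hσL, hσi⟩ := h
    obtain ⟨p, hp, rfl⟩ := List.mem_map.1 hσL
    right
    refine ⟨p.1, runMech_val k lam vs F p hp, ?_⟩
    rw [utility_prod_of_mem hd hσL hσi]
    exact (runMech_Q k lam vs F p hp i hσi).2.2
  · push_neg at h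
    exact Or.inl (utility_prod_zero h)

lemma truth_ind (W Wstar : Fin n → Finset (Fin n)) (i : Fin n)
    (hsub : ∀ j, W j ⊆ Wstar j) :
    ∀ (vs : List ℝ) (F : Finset (Fin n)), vs.Pairwise (· > ·) → (∀ v ∈ vs, 0 < v) →
      utility lam (((runMech k lam W vs F).map Prod.snd).prod) i ≤
        utility lam (((runMech k lam (Function.update W i (Wstar i)) vs F).map Prod.snd).prod) i := by
  intro vs
  set W' := Function.update W i (Wstar i) with hW'
  have hWsub : ∀ x, W x ⊆ W' x := by
    intro x
    by_cases hx : x = i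
    · subst hx; rw [hW', Function.update_self]; exact hsub x
    · rw [hW', Function.update_of_ne hx]
  induction vs with
  | nil =>
    intro F _ _
    simp [runMech, utility]
  | cons v rest ih =>
    intro F hsorted hpos
    have hvpos : 0 < v := hpos v (List.mem_cons_self)
    have hcsub : cands k lam W F v ⊆ cands k lam W' F v := by
      intro σ hσ
      rw [mem_cands_iff] at hσ ⊢
      intro x hx
      obtain ⟨h1, h2, h3, h4⟩ := hσ x hx
      exact ⟨hWsub x h1, h2, h3, h4⟩
    set σ := best (cands k lam W F v) with hσdef
    set σ' := best (cands k lam W' F v) with hσ'def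
    have hne : (cands k lam W F v).Nonempty := cands_nonempty k lam W F v
    have hne' : (cands k lam W' F v).Nonempty := cands_nonempty k lam W' F v
    have hd : ((runMech k lam W (v :: rest) F).map Prod.snd).Pairwise Equiv.Perm.Disjoint :=
      runMech_pairwise k lam _ F
    have hd' : ((runMech k lam W' (v :: rest) F).map Prod.snd).Pairwise Equiv.Perm.Disjoint :=
      runMech_pairwise k lam _ F
    have hunfold : runMech k lam W (v :: rest) F = (v, σ) :: runMech k lam W rest (F \ σ.support) :=
      rfl
    have hunfold' :
        runMech k lam W' (v :: rest) F = (v, σ') :: runMech k lam W' rest (F \ σ'.support) :=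
      rfl
    by_cases hmem : σ' ∈ cands k lam W F v
    · have heq : σ' = σ := best_eq_of_subset hne hcsub hmem
      have hlist' : runMech k lam W' (v :: rest) F =
          (v, σ) :: runMech k lam W' rest (F \ σ.support) := by rw [hunfold', heq]
      have hd2 : (σ :: (runMech k lam W rest (F \ σ.support)).map Prod.snd).Pairwise
          Equiv.Perm.Disjoint := by
        have := hd; rw [hunfold, List.map_cons] at this; exact this
      have hd2' : (σ :: (runMech k lam W' rest (F \ σ.support)).map Prod.snd).Pairwise
          Equiv.Perm.Disjoint := by
        have := hd'; rw [hlist', List.map_cons] at this; exact this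
      rw [hunfold, hlist', List.map_cons, List.map_cons]
      by_cases hi : σ i = i
      · rw [utility_cons_of_fixed hd2 hi, utility_cons_of_fixed hd2' hi]
        exact ih _ (List.Pairwise.sublist (List.sublist_cons_self v rest) hsorted)
          (fun u hu => hpos u (List.mem_cons_of_mem _ hu))
      · rw [utility_prod_of_mem hd2 (List.mem_cons_self) hi,
          utility_prod_of_mem hd2' (List.mem_cons_self) hi]
    · have hQ' : Qpred k lam W' F v σ' := (mem_cands_iff k lam).1 (best_spec hne').1
      have hnotQ : ¬ Qpred k lam W F v σ' := fun h => hmem ((mem_cands_iff k lam).2 h)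
      have hσ'i : σ' i ≠ i := by
        by_contra hii
        apply hnotQ
        intro x hx
        obtain ⟨h1, h2, h3, h4⟩ := hQ' x hx
        have hxi : x ≠ i := fun hxe => hx (by rw [hxe]; exact hii)
        rw [hW', Function.update_of_ne hxi] at h1
        exact ⟨h1, h2, h3, h4⟩
      have hσ'mem : σ' ∈ (runMech k lam W' (v :: rest) F).map Prod.snd :=
        List.mem_map.2 ⟨(v, σ'), by rw [hunfold']; exact List.mem_cons_self, rfl⟩
      have hu' : utility lam (((runMech k lam W' (v :: rest) F).map Prod.snd).prod) i = v := by
        rw [utility_prod_of_mem hd' hσ'mem hσ'i]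
        exact (hQ' i hσ'i).2.2.2
      refine le_trans ?_ (le_of_eq hu'.symm)
      rcases utility_runMech_mem k lam W (v :: rest) F i with h0 | ⟨v', hv', hval⟩
      · rw [h0]; exact le_of_lt hvpos
      · rw [hval]
        rcases List.mem_cons.1 hv' with rfl | hv'rest
        · exact le_refl _
        · exact le_of_lt (List.rel_of_pairwise_cons hsorted hv'rest)

end Truth



section Rho

variable (k : ℕ) (lam : ℕ → ℝ)

lemma rhoSet_bddAbove (hlam : IsLengthFunction k lam) :
    BddAbove {x : ℝ |
      ∃ ℓ ℓ' : ℕ, 2 ≤ ℓ ∧ ℓ < ℓ' ∧ ℓ' ≤ k ∧ lam ℓ' < lam ℓ ∧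
        x = max ((ℓ' : ℝ) * lam ℓ' / lam ℓ)
                (((ℓ : ℝ) - 1) / (ℓ : ℝ) * ((ℓ' : ℝ) * lam ℓ' / lam ℓ) + 1)} := by
  refine ⟨(k : ℝ) + 1, ?_⟩
  rintro x ⟨ℓ, ℓ', h2, hlt, hk, hv, rfl⟩
  have hℓk : ℓ ≤ k := le_trans (le_of_lt hlt) hk
  have hpos : 0 < lam ℓ := (hlam.1 ℓ h2 hℓk).1
  have h2' : 2 ≤ ℓ' := le_trans h2 (le_of_lt hlt)
  have hpos' : 0 < lam ℓ' := (hlam.1 ℓ' h2' hk).1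
  have hle : lam ℓ' ≤ lam ℓ := hlam.2 ℓ ℓ' h2 (le_of_lt hlt) hk
  have hℓ'0 : (0:ℝ) ≤ (ℓ' : ℝ) := by positivity
  have ht0 : 0 ≤ (ℓ' : ℝ) * lam ℓ' / lam ℓ := by positivity
  have ht : (ℓ' : ℝ) * lam ℓ' / lam ℓ ≤ (ℓ' : ℝ) := by
    rw [div_le_iff₀ hpos]; nlinarith
  have hℓ'k : (ℓ' : ℝ) ≤ (k : ℝ) := by exact_mod_cast hk
  have hℓpos : (0:ℝ) < (ℓ : ℝ) := by
    have : 0 < ℓ := by omega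
    exact_mod_cast this
  have h2ℓ : (2:ℝ) ≤ (ℓ : ℝ) := by exact_mod_cast h2
  have hfrac0 : 0 ≤ ((ℓ : ℝ) - 1) / (ℓ : ℝ) := by
    apply div_nonneg _ (le_of_lt hℓpos); linarith
  have hfrac1 : ((ℓ : ℝ) - 1) / (ℓ : ℝ) ≤ 1 := by
    rw [div_le_one hℓpos]; linarith
  apply max_le
  · linarith
  · nlinarith

lemma rho_pair_le (hlam : IsLengthFunction k lam) {r : ℝ} (hrho : rho k lam ≤ r)
    {ℓ m : ℕ} (h2 : 2 ≤ ℓ) (hℓk : ℓ ≤ k) (h2m : 2 ≤ m) (hmk : m ≤ k)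
    (hv : lam m < lam ℓ) :
    (m : ℝ) * lam m / lam ℓ ≤ r ∧
      ((ℓ : ℝ) - 1) / (ℓ : ℝ) * ((m : ℝ) * lam m / lam ℓ) + 1 ≤ r := by
  have hlt : ℓ < m := by
    by_contra h
    push_neg at h
    have := hlam.2 m ℓ h2m h hℓk
    linarith
  have hmem : max ((m : ℝ) * lam m / lam ℓ)
      (((ℓ : ℝ) - 1) / (ℓ : ℝ) * ((m : ℝ) * lam m / lam ℓ) + 1) ∈
      {x : ℝ |
        ∃ ℓ ℓ' : ℕ, 2 ≤ ℓ ∧ ℓ < ℓ' ∧ ℓ' ≤ k ∧ lam ℓ' < lam ℓ ∧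
          x = max ((ℓ' : ℝ) * lam ℓ' / lam ℓ)
                  (((ℓ : ℝ) - 1) / (ℓ : ℝ) * ((ℓ' : ℝ) * lam ℓ' / lam ℓ) + 1)} :=
    ⟨ℓ, m, h2, hlt, hmk, hv, rfl⟩
  have hsup := le_csSup (rhoSet_bddAbove k lam hlam) hmem
  have hmr : max ((m : ℝ) * lam m / lam ℓ)
      (((ℓ : ℝ) - 1) / (ℓ : ℝ) * ((m : ℝ) * lam m / lam ℓ) + 1) ≤ r :=
    le_trans hsup hrho
  exact ⟨le_trans (le_max_left _ _) hmr, le_trans (le_max_right _ _) hmr⟩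

variable {n : ℕ}

set_option maxHeartbeats 1000000 in
/-- The per-phase counting inequality. -/
lemma phase_bound (hlam : IsLengthFunction k lam) {r : ℝ} (hr1 : 1 ≤ r)
    (hrho : rho k lam ≤ r) (v : ℝ) (ℓ₀ : ℕ) (h2ℓ₀ : 2 ≤ ℓ₀) (hℓ₀k : ℓ₀ ≤ k)
    (hℓ₀v : lam ℓ₀ = v) (nn : ℕ) (A B : Finset (Finset (Fin n)))
    (hA : ∀ c ∈ A, lam c.card = v ∧ 2 ≤ c.card ∧ c.card ≤ k)
    (hB : ∀ c ∈ B, lam c.card < v ∧ 2 ≤ c.card ∧ c.card ≤ k)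
    (hcount : A.card + B.card ≤ nn)
    (hsum : ∑ c ∈ A, c.card ≤ nn) :
    (∑ c ∈ A, (c.card : ℝ) * lam c.card) + ∑ c ∈ B, (c.card : ℝ) * lam c.card ≤
      r * (v * nn) := by
  have hv : 0 < v := hℓ₀v ▸ (hlam.1 ℓ₀ h2ℓ₀ hℓ₀k).1
  have hAsum : ∑ c ∈ A, (c.card : ℝ) * lam c.card = v * ∑ c ∈ A, (c.card : ℝ) := by
    rw [Finset.mul_sum]
    refine Finset.sum_congr rfl fun c hc => ?_
    rw [(hA c hc).1]; ring
  have ha0 : 0 ≤ ∑ c ∈ A, (c.card : ℝ) :=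
    Finset.sum_nonneg fun c _ => by positivity
  have han : ∑ c ∈ A, (c.card : ℝ) ≤ (nn : ℝ) := by
    have h1 : ((∑ c ∈ A, c.card : ℕ) : ℝ) ≤ (nn : ℝ) := by exact_mod_cast hsum
    rw [Nat.cast_sum] at h1
    exact h1
  have hnn0 : (0:ℝ) ≤ (nn : ℝ) := by positivity
  have hrvn : v * (nn:ℝ) ≤ r * (v * nn) := le_mul_of_one_le_left (by positivity) hr1
  rcases B.eq_empty_or_nonempty with rfl | hBe
  · rw [Finset.sum_empty, add_zero, hAsum]
    have h1 : v * ∑ c ∈ A, (c.card : ℝ) ≤ v * nn :=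
      mul_le_mul_of_nonneg_left han (le_of_lt hv)
    linarith
  · obtain ⟨cs, hcsB, hcs⟩ :=
      Finset.exists_mem_eq_sup' hBe (fun c => (c.card : ℝ) * lam c.card)
    have hcs2 : 2 ≤ cs.card := (hB cs hcsB).2.1
    have hcsk : cs.card ≤ k := (hB cs hcsB).2.2
    have hcsv : lam cs.card < v := (hB cs hcsB).1
    have hcspos : 0 < lam cs.card := (hlam.1 cs.card hcs2 hcsk).1
    have hT0 : 0 ≤ (cs.card : ℝ) * lam cs.card := by positivity
    have hsumB : ∑ c ∈ B, (c.card : ℝ) * lam c.card ≤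
        (B.card : ℝ) * ((cs.card : ℝ) * lam cs.card) := by
      have h1 := Finset.sum_le_card_nsmul B (fun c => (c.card : ℝ) * lam c.card)
        ((cs.card : ℝ) * lam cs.card)
        (fun c hc => by
          have := Finset.le_sup' (fun c : Finset (Fin n) => (c.card : ℝ) * lam c.card) hc
          rw [hcs] at this
          exact this)
      rwa [nsmul_eq_mul] at h1
    have hBcard : (B.card : ℝ) ≤ (nn : ℝ) - A.card := by
      have h1 : ((A.card + B.card : ℕ) : ℝ) ≤ (nn : ℝ) := by exact_mod_cast hcount
      push_cast at h1
      linarith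
    have hAcard0 : (0:ℝ) ≤ (A.card : ℝ) := by positivity
    have hmain : (∑ c ∈ A, (c.card : ℝ) * lam c.card) + ∑ c ∈ B, (c.card : ℝ) * lam c.card ≤
        v * (∑ c ∈ A, (c.card : ℝ)) + ((nn : ℝ) - A.card) * ((cs.card : ℝ) * lam cs.card) := by
      rw [hAsum]
      have h2 := mul_le_mul_of_nonneg_right hBcard hT0
      linarith
    rcases A.eq_empty_or_nonempty with hAe | hAe
    · have ha_eq : ∑ c ∈ A, (c.card : ℝ) = 0 := by rw [hAe]; simp
      have hAcard : (A.card : ℝ) = 0 := by rw [hAe]; simp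
      have hpair := rho_pair_le k lam hlam hrho h2ℓ₀ hℓ₀k hcs2 hcsk
        (by rw [hℓ₀v]; exact hcsv)
      have hur : (cs.card : ℝ) * lam cs.card / v ≤ r := by
        rw [← hℓ₀v]; exact hpair.1
      have hTvr : (cs.card : ℝ) * lam cs.card ≤ v * r := by
        rw [div_le_iff₀ hv] at hur
        linarith
      have h3 : ((nn : ℝ) - A.card) * ((cs.card : ℝ) * lam cs.card) ≤ (nn : ℝ) * (v * r) := by
        rw [hAcard, sub_zero]
        exact mul_le_mul_of_nonneg_left hTvr hnn0
      rw [ha_eq] at hmain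
      have : (nn : ℝ) * (v * r) = r * (v * nn) := by ring
      linarith
    · obtain ⟨cg, hcgA, hcg⟩ := Finset.exists_mem_eq_sup' hAe (fun c => c.card)
      have hg2 : 2 ≤ A.sup' hAe (fun c => c.card) := hcg ▸ (hA cg hcgA).2.1
      have hgk : A.sup' hAe (fun c => c.card) ≤ k := hcg ▸ (hA cg hcgA).2.2
      have hgv : lam (A.sup' hAe (fun c => c.card)) = v := hcg ▸ (hA cg hcgA).1
      obtain ⟨g, hg_def⟩ : ∃ g : ℕ, g = A.sup' hAe (fun c => c.card) := ⟨_, rfl⟩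
      rw [← hg_def] at hg2 hgk hgv
      have hgpos : (0:ℝ) < (g : ℝ) := by
        have : 0 < g := by omega
        exact_mod_cast this
      have hg0 : (g : ℝ) ≠ 0 := ne_of_gt hgpos
      have ha_le_g : ∑ c ∈ A, (c.card : ℝ) ≤ (g : ℝ) * A.card := by
        have h1 := Finset.sum_le_card_nsmul A (fun c => (c.card : ℝ)) ((g : ℝ))
          (fun c hc => by
            show ((c.card : ℕ) : ℝ) ≤ (g : ℝ)
            have h2 : c.card ≤ A.sup' hAe (fun c => c.card) :=
              Finset.le_sup' (fun c : Finset (Fin n) => c.card) hc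
            rw [← hg_def] at h2
            exact_mod_cast h2)
        rw [nsmul_eq_mul] at h1
        linarith
      have hpair := rho_pair_le k lam hlam hrho hg2 hgk hcs2 hcsk
        (by rw [hgv]; exact hcsv)
      have hur : (cs.card : ℝ) * lam cs.card / v ≤ r := by
        rw [← hgv]; exact hpair.1
      have hur2 : ((g : ℝ) - 1) / (g : ℝ) * ((cs.card : ℝ) * lam cs.card / v) + 1 ≤ r := by
        rw [← hgv]; exact hpair.2
      have hu0 : 0 ≤ (cs.card : ℝ) * lam cs.card / v := by positivity
      by_cases hcase : (g : ℝ) * v ≤ (cs.card : ℝ) * lam cs.card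
      · have e1 : v * (∑ c ∈ A, (c.card : ℝ)) ≤ (g : ℝ) * v * A.card := by nlinarith
        have e2 : (g : ℝ) * v * A.card ≤ ((cs.card : ℝ) * lam cs.card) * A.card :=
          mul_le_mul_of_nonneg_right hcase hAcard0
        have e4 : (nn : ℝ) * ((cs.card : ℝ) * lam cs.card) ≤ (nn : ℝ) * (v * r) := by
          apply mul_le_mul_of_nonneg_left _ hnn0
          rw [div_le_iff₀ hv] at hur
          linarith
        have e3 : ((cs.card : ℝ) * lam cs.card) * A.card +
            ((nn : ℝ) - A.card) * ((cs.card : ℝ) * lam cs.card) =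
            (nn : ℝ) * ((cs.card : ℝ) * lam cs.card) := by ring
        have e5 : (nn : ℝ) * (v * r) = r * (v * nn) := by ring
        linarith
      · push_neg at hcase
        have hug : (cs.card : ℝ) * lam cs.card / v < (g : ℝ) := by
          rw [div_lt_iff₀ hv]
          linarith
        have hAcge : (∑ c ∈ A, (c.card : ℝ)) / (g : ℝ) ≤ (A.card : ℝ) := by
          rw [div_le_iff₀ hgpos]
          linarith
        have hstep : ((nn : ℝ) - A.card) * ((cs.card : ℝ) * lam cs.card) ≤
            ((nn : ℝ) - (∑ c ∈ A, (c.card : ℝ)) / (g : ℝ)) * ((cs.card : ℝ) * lam cs.card) := by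
          apply mul_le_mul_of_nonneg_right _ hT0
          linarith
        have hid : v * (∑ c ∈ A, (c.card : ℝ)) +
            ((nn : ℝ) - (∑ c ∈ A, (c.card : ℝ)) / (g : ℝ)) * ((cs.card : ℝ) * lam cs.card) =
            (1 + ((g : ℝ) - 1) / g * ((cs.card : ℝ) * lam cs.card / v)) * (v * nn) -
              v * (((nn : ℝ) - ∑ c ∈ A, (c.card : ℝ)) *
                ((g : ℝ) - (cs.card : ℝ) * lam cs.card / v)) / g := by
          field_simp
          ring
        have hkey : 0 ≤ v * (((nn : ℝ) - ∑ c ∈ A, (c.card : ℝ)) *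
            ((g : ℝ) - (cs.card : ℝ) * lam cs.card / v)) / g := by
          apply div_nonneg _ (le_of_lt hgpos)
          apply mul_nonneg (le_of_lt hv)
          apply mul_nonneg <;> linarith
        have hstep2 : (1 + ((g : ℝ) - 1) / g * ((cs.card : ℝ) * lam cs.card / v)) * (v * nn) ≤
            r * (v * nn) := by
          apply mul_le_mul_of_nonneg_right _ (by positivity)
          linarith
        linarith

end Rho



section Approx

variable {n : ℕ}

lemma cycles_eq_or_disjoint {π : Equiv.Perm (Fin n)} {c1 c2 : Finset (Fin n)}
    (h1 : ∃ x, π x ≠ x ∧ c1 = (π.cycleOf x).support)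
    (h2 : ∃ x, π x ≠ x ∧ c2 = (π.cycleOf x).support) :
    c1 = c2 ∨ Disjoint c1 c2 := by
  obtain ⟨x1, hx1, rfl⟩ := h1
  obtain ⟨x2, hx2, rfl⟩ := h2
  by_cases hd : Disjoint (π.cycleOf x1).support (π.cycleOf x2).support
  · exact Or.inr hd
  · left
    obtain ⟨y, hy⟩ := Finset.not_disjoint_iff_nonempty_inter.1 hd
    have hy1 : y ∈ (π.cycleOf x1).support := (Finset.mem_inter.1 hy).1
    have hy2 : y ∈ (π.cycleOf x2).support := (Finset.mem_inter.1 hy).2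
    rw [← (cycle_mem_facts hx1 hy1).2.1, ← (cycle_mem_facts hx2 hy2).2.1]

lemma restrict_good (π : Equiv.Perm (Fin n)) (D0 : Finset (Finset (Fin n)))
    (hcyc : ∀ c ∈ D0, ∃ x, π x ≠ x ∧ c = (π.cycleOf x).support) :
    ∃ τ : Equiv.Perm (Fin n), τ.support = D0.biUnion id ∧
      (∀ y ∈ D0.biUnion id, τ y = π y) ∧
      ∀ c ∈ D0, ∀ y ∈ c, cycLen τ y = c.card := by
  classical
  have hU : ∀ y ∈ D0.biUnion id, π y ≠ y ∧ π y ∈ D0.biUnion id ∧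
      π⁻¹ y ∈ D0.biUnion id ∧ (π.cycleOf y).support ⊆ D0.biUnion id := by
    intro y hy
    obtain ⟨c, hcD, hyc⟩ := Finset.mem_biUnion.1 hy
    obtain ⟨x, hx, rfl⟩ := hcyc c hcD
    obtain ⟨f1, f2, f3, f4⟩ := cycle_mem_facts hx hyc
    refine ⟨f1, Finset.mem_biUnion.2 ⟨_, hcD, f3⟩, Finset.mem_biUnion.2 ⟨_, hcD, f4⟩, ?_⟩
    rw [f2]
    intro z hz
    exact Finset.mem_biUnion.2 ⟨_, hcD, hz⟩
  set τ := restrictPerm π (D0.biUnion id) (fun y hy => (hU y hy).2.1)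
    (fun y hy => (hU y hy).2.2.1) with hτ
  have hag : ∀ y ∈ D0.biUnion id, τ y = π y := fun y hy => restrictPerm_apply_mem hy
  have hsupp : τ.support = D0.biUnion id := by
    ext z
    rw [Equiv.Perm.mem_support]
    constructor
    · intro hz
      by_contra hzU
      exact hz (restrictPerm_apply_not_mem hzU)
    · intro hz
      rw [hag z hz]
      exact (hU z hz).1
  refine ⟨τ, hsupp, hag, ?_⟩
  intro c hc y hyc
  have hyU : y ∈ D0.biUnion id := Finset.mem_biUnion.2 ⟨c, hc, hyc⟩
  have hπy : π y ≠ y := (hU y hyU).1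
  have hlen : cycLen τ y = cycLen π y := by
    refine cycLen_congr hπy ?_
    intro z hz
    exact hag z ((hU y hyU).2.2.2 hz)
  rw [hlen]
  obtain ⟨x, hx, rfl⟩ := hcyc c hc
  exact cycLen_eq_card hx hyc

set_option maxHeartbeats 1600000 in
lemma approx_ind (k : ℕ) (lam : ℕ → ℝ) (hlam : IsLengthFunction k lam) {r : ℝ}
    (hr1 : 1 ≤ r) (hrho : rho k lam ≤ r) (Wstar : Fin n → Finset (Fin n))
    (π : Equiv.Perm (Fin n)) (hπ : Feasible k Wstar π) :
    ∀ (vs : List ℝ) (F : Finset (Fin n)) (D : Finset (Finset (Fin n))),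
      vs.Pairwise (· > ·) →
      (∀ v ∈ vs, ∃ ℓ, 2 ≤ ℓ ∧ ℓ ≤ k ∧ lam ℓ = v) →
      (∀ c ∈ D, ∃ x, π x ≠ x ∧ c = (π.cycleOf x).support) →
      (∀ c ∈ D, c ⊆ F) →
      (∀ c ∈ D, lam c.card ∈ vs) →
      ∑ c ∈ D, (c.card : ℝ) * lam c.card ≤
        r * ((runMech k lam Wstar vs F).map
          (fun p => p.1 * (p.2.support.card : ℝ))).sum := by
  classical
  intro vs
  induction vs with
  | nil =>
    intro F D _ _ _ _ hval
    have hD : D = ∅ := Finset.eq_empty_of_forall_notMem fun c hc => by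
      simpa using hval c hc
    simp [hD, runMech]
  | cons v rest ih =>
    intro F D hsorted hmemvs hcyc hsubF hval
    obtain ⟨ℓ₀, hℓ₀2, hℓ₀k, hℓ₀v⟩ := hmemvs v (List.mem_cons_self)
    have hcard : ∀ c ∈ D, 2 ≤ c.card ∧ c.card ≤ k := by
      intro c hc
      obtain ⟨x, hx, rfl⟩ := hcyc c hc
      exact ⟨Equiv.Perm.two_le_card_support_cycleOf_iff.2 hx, (hπ x hx).2⟩
    set σ := best (cands k lam Wstar F v) with hσdef
    have hne : (cands k lam Wstar F v).Nonempty := cands_nonempty k lam Wstar F v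
    have hQσ : Qpred k lam Wstar F v σ := (mem_cands_iff k lam).1 (best_spec hne).1
    have hmaxσ : ∀ τ, Qpred k lam Wstar F v τ → τ.support.card ≤ σ.support.card :=
      fun τ hτ => best_max_card hne ((mem_cands_iff k lam).2 hτ)
    -- Claim 0 : every cycle of value v in D intersects the support of σ
    have claim0 : ∀ c ∈ D, lam c.card = v → ¬ Disjoint c σ.support := by
      intro c hc hcv hdisj
      obtain ⟨τ, hτsupp, hτag, hτlen⟩ := restrict_good π {c}
        (by
          intro c' hc'
          rw [Finset.mem_singleton] at hc'
          rw [hc']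
          exact hcyc c hc)
      rw [Finset.singleton_biUnion] at hτsupp hτag
      simp only [id] at hτsupp hτag
      have hnotS : ∀ z ∈ c, z ∉ σ.support := fun z hz => Finset.disjoint_left.1 hdisj hz
      have hnotc : ∀ z ∈ σ.support, z ∉ c := fun z hz hzc => hnotS z hzc hz
      have hpd : Equiv.Perm.Disjoint σ τ := by
        intro z
        by_cases hz : σ z = z
        · exact Or.inl hz
        · right
          have hzS : z ∈ σ.support := Equiv.Perm.mem_support.2 hz
          have : z ∉ τ.support := by rw [hτsupp]; exact hnotc z hzS
          exact Equiv.Perm.notMem_support.1 this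
      have hψsupp : (σ * τ).support = σ.support ∪ c := by
        rw [Equiv.Perm.Disjoint.support_mul hpd, hτsupp]
      have hτfix : ∀ z, z ∉ c → τ z = z := by
        intro z hz
        apply Equiv.Perm.notMem_support.1
        rw [hτsupp]
        exact hz
      have hσfix : ∀ z, z ∈ c → σ z = z := by
        intro z hz
        apply Equiv.Perm.notMem_support.1
        exact hnotS z hz
      have hQψ : Qpred k lam Wstar F v (σ * τ) := by
        intro x hx
        have hxmem : x ∈ σ.support ∪ c := by
          rw [← hψsupp]; exact Equiv.Perm.mem_support.2 hx
        rcases Finset.mem_union.1 hxmem with hxS | hxc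
        · have hτx : τ x = x := hτfix x (hnotc x hxS)
          have hσx : σ x ≠ x := Equiv.Perm.mem_support.1 hxS
          have happ : (σ * τ) x = σ x := by rw [Equiv.Perm.mul_apply, hτx]
          have hagσ : ∀ y ∈ (σ.cycleOf x).support, (σ * τ) y = σ y := by
            intro y hy
            have hyS : y ∈ σ.support := Equiv.Perm.support_cycleOf_le σ x hy
            rw [Equiv.Perm.mul_apply, hτfix y (hnotc y hyS)]
          have hlen : cycLen (σ * τ) x = cycLen σ x := cycLen_congr hσx hagσ
          obtain ⟨q1, q2, q3, q4⟩ := hQσ x hσx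
          exact ⟨by rw [happ]; exact q1, q2, by rw [hlen]; exact q3, by rw [hlen]; exact q4⟩
        · have hxτsupp : x ∈ τ.support := by rw [hτsupp]; exact hxc
          have hτx_ne : τ x ≠ x := Equiv.Perm.mem_support.1 hxτsupp
          have hτxc : τ x ∈ c := by
            rw [← hτsupp]
            exact Equiv.Perm.apply_mem_support.2 hxτsupp
          have happ : (σ * τ) x = τ x := by
            rw [Equiv.Perm.mul_apply]
            exact hσfix (τ x) hτxc
          have hagτ : ∀ y ∈ (τ.cycleOf x).support, (σ * τ) y = τ y := by
            intro y hy
            have hyτ : y ∈ τ.support := Equiv.Perm.support_cycleOf_le τ x hy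
            have hτyc : τ y ∈ c := by
              rw [← hτsupp]
              exact Equiv.Perm.apply_mem_support.2 hyτ
            rw [Equiv.Perm.mul_apply]
            exact hσfix (τ y) hτyc
          have hlen : cycLen (σ * τ) x = cycLen τ x := cycLen_congr hτx_ne hagτ
          have hlenc : cycLen τ x = c.card := hτlen c (Finset.mem_singleton_self c) x hxc
          have hπx : π x ≠ x := by
            obtain ⟨x0, hx0, hc0⟩ := hcyc c hc
            exact (cycle_mem_facts hx0 (hc0 ▸ hxc)).1
          refine ⟨?_, hsubF c hc hxc, ?_, ?_⟩
          · rw [happ, hτag x hxc]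
            exact (hπ x hπx).1
          · rw [hlen, hlenc]; exact (hcard c hc).2
          · rw [hlen, hlenc]; exact hcv
      have hψcard := hmaxσ (σ * τ) hQψ
      have hcu : (σ.support ∪ c).card = σ.support.card + c.card :=
        Finset.card_union_of_disjoint hdisj.symm
      rw [hψsupp, hcu] at hψcard
      have := (hcard c hc).1
      omega
    -- the three groups
    set A := D.filter (fun c => lam c.card = v) with hA_def
    set B1 := (D.filter (fun c => ¬ lam c.card = v)).filter
      (fun c => ¬ Disjoint c σ.support) with hB1_def
    set B2 := (D.filter (fun c => ¬ lam c.card = v)).filter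
      (fun c => Disjoint c σ.support) with hB2_def
    have hAD : A ⊆ D := Finset.filter_subset _ _
    have hB1D : B1 ⊆ D := (Finset.filter_subset _ _).trans (Finset.filter_subset _ _)
    have hB2D : B2 ⊆ D := (Finset.filter_subset _ _).trans (Finset.filter_subset _ _)
    -- claim 1
    have claim1 : ∑ c ∈ A, c.card ≤ σ.support.card := by
      obtain ⟨τ, hτsupp, hτag, hτlen⟩ := restrict_good π A (fun c hc => hcyc c (hAD hc))
      have hQτ : Qpred k lam Wstar F v τ := by
        intro x hx
        have hxsupp : x ∈ τ.support := Equiv.Perm.mem_support.2 hx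
        have hxU : x ∈ A.biUnion id := by rw [← hτsupp]; exact hxsupp
        obtain ⟨c, hcA, hxc⟩ := Finset.mem_biUnion.1 hxU
        have hπx : π x ≠ x := by
          obtain ⟨x0, hx0, hc0⟩ := hcyc c (hAD hcA)
          exact (cycle_mem_facts hx0 (hc0 ▸ hxc)).1
        have hlen : cycLen τ x = c.card := hτlen c hcA x hxc
        refine ⟨?_, hsubF c (hAD hcA) hxc, ?_, ?_⟩
        · rw [hτag x hxU]
          exact (hπ x hπx).1
        · rw [hlen]; exact (hcard c (hAD hcA)).2
        · rw [hlen]; exact (Finset.mem_filter.1 hcA).2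
      have h1 := hmaxσ τ hQτ
      rw [hτsupp] at h1
      have h2 : (A.biUnion id).card = ∑ c ∈ A, c.card := by
        rw [Finset.card_biUnion]
        · rfl
        · intro c1 hc1 c2 hc2 hne12
          rcases cycles_eq_or_disjoint (hcyc c1 (hAD hc1)) (hcyc c2 (hAD hc2)) with he | hd
          · exact absurd he hne12
          · exact hd
      omega
    -- claim 2
    have hABdisj : Disjoint A B1 := by
      rw [Finset.disjoint_left]
      intro c hcA hcB
      exact ((Finset.mem_filter.1 (Finset.mem_filter.1 hcB).1).2) (Finset.mem_filter.1 hcA).2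
    have claim2 : A.card + B1.card ≤ σ.support.card := by
      have hinter : ∀ c ∈ A ∪ B1, (c ∩ σ.support).Nonempty := by
        intro c hc
        rcases Finset.mem_union.1 hc with hcA | hcB
        · exact Finset.not_disjoint_iff_nonempty_inter.1
            (claim0 c (hAD hcA) (Finset.mem_filter.1 hcA).2)
        · exact Finset.not_disjoint_iff_nonempty_inter.1 (Finset.mem_filter.1 hcB).2
      rcases (A ∪ B1).eq_empty_or_nonempty with hemp | ⟨c₀, hc₀⟩
      · have h1 : A = ∅ := Finset.union_eq_empty.1 hemp |>.1
        have h2 : B1 = ∅ := Finset.union_eq_empty.1 hemp |>.2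
        simp [h1, h2]
      · obtain ⟨x₀, hx₀⟩ := hinter c₀ hc₀
        have hcc : (A ∪ B1).card ≤ σ.support.card := by
          apply Finset.card_le_card_of_injOn
            (fun c => if h : (c ∩ σ.support).Nonempty then (c ∩ σ.support).min' h else x₀)
          · intro c hc
            dsimp only
            rw [dif_pos (hinter c hc)]
            exact (Finset.mem_inter.1 ((c ∩ σ.support).min'_mem (hinter c hc))).2
          · intro c1 hc1 c2 hc2 heq
            rw [Finset.mem_coe] at hc1 hc2
            dsimp only at heq
            rw [dif_pos (hinter c1 hc1), dif_pos (hinter c2 hc2)] at heq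
            have hm1 := (c1 ∩ σ.support).min'_mem (hinter c1 hc1)
            have hm2 := (c2 ∩ σ.support).min'_mem (hinter c2 hc2)
            rw [heq] at hm1
            have hy1 : (c2 ∩ σ.support).min' (hinter c2 hc2) ∈ c1 :=
              (Finset.mem_inter.1 hm1).1
            have hy2 : (c2 ∩ σ.support).min' (hinter c2 hc2) ∈ c2 :=
              (Finset.mem_inter.1 hm2).1
            have hDc1 : c1 ∈ D := by
              rcases Finset.mem_union.1 hc1 with h | h
              · exact hAD h
              · exact hB1D h
            have hDc2 : c2 ∈ D := by
              rcases Finset.mem_union.1 hc2 with h | h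
              · exact hAD h
              · exact hB1D h
            rcases cycles_eq_or_disjoint (hcyc c1 hDc1) (hcyc c2 hDc2) with he | hd
            · exact he
            · exact absurd hy2 (Finset.disjoint_left.1 hd hy1)
        rw [Finset.card_union_of_disjoint hABdisj] at hcc
        exact hcc
    -- bounds on the members
    have hAprop : ∀ c ∈ A, lam c.card = v ∧ 2 ≤ c.card ∧ c.card ≤ k := by
      intro c hc
      exact ⟨(Finset.mem_filter.1 hc).2, (hcard c (hAD hc)).1, (hcard c (hAD hc)).2⟩
    have hB1prop : ∀ c ∈ B1, lam c.card < v ∧ 2 ≤ c.card ∧ c.card ≤ k := by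
      intro c hc
      have hcv : lam c.card ≠ v := (Finset.mem_filter.1 (Finset.mem_filter.1 hc).1).2
      have hmem2 : lam c.card ∈ v :: rest := hval c (hB1D hc)
      have hlt : lam c.card < v := by
        rcases List.mem_cons.1 hmem2 with he | hm
        · exact absurd he hcv
        · exact List.rel_of_pairwise_cons hsorted hm
      exact ⟨hlt, (hcard c (hB1D hc)).1, (hcard c (hB1D hc)).2⟩
    -- phase bound for A and B1
    have hphase := phase_bound k lam hlam hr1 hrho v ℓ₀ hℓ₀2 hℓ₀k hℓ₀v
      σ.support.card A B1 hAprop hB1prop claim2 claim1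
    -- induction for B2
    have hIH := ih (F \ σ.support) B2
      (List.Pairwise.sublist (List.sublist_cons_self v rest) hsorted)
      (fun u hu => hmemvs u (List.mem_cons_of_mem _ hu))
      (fun c hc => hcyc c (hB2D hc))
      (fun c hc => by
        have h1 : c ⊆ F := hsubF c (hB2D hc)
        have h2 : Disjoint c σ.support := (Finset.mem_filter.1 hc).2
        intro z hz
        rw [Finset.mem_sdiff]
        exact ⟨h1 hz, Finset.disjoint_left.1 h2 hz⟩)
      (fun c hc => by
        have hne2 : lam c.card ≠ v := (Finset.mem_filter.1 (Finset.mem_filter.1 hc).1).2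
        rcases List.mem_cons.1 (hval c (hB2D hc)) with he | hm
        · exact absurd he hne2
        · exact hm)
    -- sum split
    have hsplit : ∑ c ∈ D, (c.card : ℝ) * lam c.card =
        (∑ c ∈ A, (c.card : ℝ) * lam c.card) +
          ((∑ c ∈ B2, (c.card : ℝ) * lam c.card) +
            (∑ c ∈ B1, (c.card : ℝ) * lam c.card)) := by
      rw [hA_def, hB1_def, hB2_def]
      rw [← Finset.sum_filter_add_sum_filter_not D (fun c => lam c.card = v)
        (fun c => (c.card : ℝ) * lam c.card)]
      congr 1
      rw [← Finset.sum_filter_add_sum_filter_not (D.filter (fun c => ¬ lam c.card = v))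
        (fun c => Disjoint c σ.support) (fun c => (c.card : ℝ) * lam c.card)]
    -- run unfold
    have hrun : (runMech k lam Wstar (v :: rest) F).map
        (fun p => p.1 * (p.2.support.card : ℝ)) =
        (v * (σ.support.card : ℝ)) ::
          ((runMech k lam Wstar rest (F \ σ.support)).map
            (fun p => p.1 * (p.2.support.card : ℝ))) := rfl
    rw [hrun, List.sum_cons, hsplit]
    have hcomb : (∑ c ∈ A, (c.card : ℝ) * lam c.card) + (∑ c ∈ B1, (c.card : ℝ) * lam c.card) ≤
        r * (v * σ.support.card) := hphase
    have hexp : r * (v * (σ.support.card : ℝ) +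
        ((runMech k lam Wstar rest (F \ σ.support)).map
          (fun p => p.1 * (p.2.support.card : ℝ))).sum) =
        r * (v * (σ.support.card : ℝ)) +
          r * ((runMech k lam Wstar rest (F \ σ.support)).map
            (fun p => p.1 * (p.2.support.card : ℝ))).sum := by ring
    rw [hexp]
    linarith

end Approx

end Aux

section Assemble

variable {n : ℕ}

lemma SW_runMech (k : ℕ) (lam : ℕ → ℝ) (W : Fin n → Finset (Fin n)) (vs : List ℝ)
    (F : Finset (Fin n)) :
    SW lam (((runMech k lam W vs F).map Prod.snd).prod) =
      ((runMech k lam W vs F).map (fun p => p.1 * (p.2.support.card : ℝ))).sum := by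
  rw [SW_prod (runMech_pairwise k lam vs F), List.map_map]
  congr 1
  refine List.map_congr_left ?_
  intro p hp
  show SW lam p.2 = p.1 * (p.2.support.card : ℝ)
  rw [SW_eq_sum_support]
  have hconst : ∀ i ∈ p.2.support, lam (cycLen p.2 i) = p.1 := by
    intro i hi
    exact (runMech_Q k lam vs F p hp i (Equiv.Perm.mem_support.1 hi)).2.2
  rw [Finset.sum_congr rfl hconst, Finset.sum_const, nsmul_eq_mul, mul_comm]

lemma SW_eq_sum_cycles (lam : ℕ → ℝ) (π : Equiv.Perm (Fin n)) :
    SW lam π = ∑ c ∈ π.support.image (fun x => (π.cycleOf x).support),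
      (c.card : ℝ) * lam c.card := by
  classical
  have hsupp : π.support =
      (π.support.image (fun x => (π.cycleOf x).support)).biUnion id := by
    ext z
    constructor
    · intro hz
      refine Finset.mem_biUnion.2 ⟨(π.cycleOf z).support, Finset.mem_image.2 ⟨z, hz, rfl⟩, ?_⟩
      show z ∈ (π.cycleOf z).support
      rw [Equiv.Perm.mem_support_cycleOf_iff]
      exact ⟨Equiv.Perm.SameCycle.refl _ _, hz⟩
    · intro hz
      obtain ⟨c, hcCY, hzc⟩ := Finset.mem_biUnion.1 hz
      obtain ⟨x, hx, rfl⟩ := Finset.mem_image.1 hcCY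
      exact Equiv.Perm.mem_support.2
        (cycle_mem_facts (Equiv.Perm.mem_support.1 hx) hzc).1
  have hdisj : Set.PairwiseDisjoint
      ↑(π.support.image (fun x => (π.cycleOf x).support))
      (id : Finset (Fin n) → Finset (Fin n)) := by
    intro c1 h1 c2 h2 hne12
    rw [Finset.mem_coe] at h1 h2
    obtain ⟨x1, hx1, rfl⟩ := Finset.mem_image.1 h1
    obtain ⟨x2, hx2, rfl⟩ := Finset.mem_image.1 h2
    rcases cycles_eq_or_disjoint
      (⟨x1, Equiv.Perm.mem_support.1 hx1, rfl⟩ :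
        ∃ x, π x ≠ x ∧ (π.cycleOf x1).support = (π.cycleOf x).support)
      (⟨x2, Equiv.Perm.mem_support.1 hx2, rfl⟩ :
        ∃ x, π x ≠ x ∧ (π.cycleOf x2).support = (π.cycleOf x).support) with he | hd
    · exact absurd he hne12
    · exact hd
  rw [SW_eq_sum_support]
  have hstep : ∑ i ∈ π.support, lam (cycLen π i) =
      ∑ c ∈ π.support.image (fun x => (π.cycleOf x).support),
        ∑ i ∈ c, lam (cycLen π i) := by
    conv_lhs => rw [hsupp]
    exact Finset.sum_biUnion hdisj
  rw [hstep]
  refine Finset.sum_congr rfl fun c hc => ?_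
  obtain ⟨x, hx, rfl⟩ := Finset.mem_image.1 hc
  have hconst : ∀ z ∈ (π.cycleOf x).support,
      lam (cycLen π z) = lam ((π.cycleOf x).support.card) := by
    intro z hz
    rw [cycLen_eq_card (Equiv.Perm.mem_support.1 hx) hz]
  rw [Finset.sum_congr rfl hconst, Finset.sum_const, nsmul_eq_mul]

end Assemble


/-- Theorem 4 of the paper.  For every length bound `k ≥ 3`, every
non-uniform length function `λ`, and every `ε > 0`, there exists a truthful `(k,λ)`-BE
mechanism with approximation ratio `max{ k − 1 + ε, ρ(λ) }`. -/
theorem exists_truthful_mechanism_nonuniform_approx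
    (k : ℕ) (hk : 3 ≤ k) (lam : ℕ → ℝ) (hlam : IsLengthFunction k lam)
    (hnu : NonUniform k lam) (ε : ℝ) (hε : 0 < ε) :
    ∃ f : Mechanism,
      IsMechanism k f ∧ Truthful k lam f ∧
        ApproxRatio k lam f (max ((k : ℝ) - 1 + ε) (rho k lam)) := by
  classical
  have hk3 : (3:ℝ) ≤ (k:ℝ) := by exact_mod_cast hk
  have hr1 : 1 ≤ max ((k : ℝ) - 1 + ε) (rho k lam) :=
    le_trans (by linarith) (le_max_left _ _)
  have hrho : rho k lam ≤ max ((k : ℝ) - 1 + ε) (rho k lam) := le_max_right _ _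
  have hpos : ∀ v ∈ descList ((Finset.Icc 2 k).image lam), 0 < v := by
    intro v hv
    obtain ⟨ℓ, hℓ, rfl⟩ := Finset.mem_image.1 (mem_descList.1 hv)
    obtain ⟨h2, hk'⟩ := Finset.mem_Icc.1 hℓ
    exact (hlam.1 ℓ h2 hk').1
  have hmemvs : ∀ v ∈ descList ((Finset.Icc 2 k).image lam),
      ∃ ℓ, 2 ≤ ℓ ∧ ℓ ≤ k ∧ lam ℓ = v := by
    intro v hv
    obtain ⟨ℓ, hℓ, rfl⟩ := Finset.mem_image.1 (mem_descList.1 hv)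
    obtain ⟨h2, hk'⟩ := Finset.mem_Icc.1 hℓ
    exact ⟨ℓ, h2, hk', rfl⟩
  refine ⟨mech k lam, ?_, ?_, ?_⟩
  · -- IsMechanism
    intro n W _ i hi
    have hm : mech k lam n W =
        ((runMech k lam W (descList ((Finset.Icc 2 k).image lam))
          Finset.univ).map Prod.snd).prod := rfl
    rw [hm] at hi ⊢
    have hd := runMech_pairwise k lam (W := W)
      (descList ((Finset.Icc 2 k).image lam)) Finset.univ
    obtain ⟨σ, hσmem, hσi⟩ := prod_moved hi
    obtain ⟨p, hp, rfl⟩ := List.mem_map.1 hσmem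
    have hQ := runMech_Q k lam _ _ p hp i hσi
    constructor
    · rw [prod_apply_of_mem hd hσmem (Equiv.Perm.mem_support.2 hσi)]
      exact hQ.1
    · rw [prod_cycLen_of_mem hd hσmem hσi]
      exact hQ.2.1
  · -- Truthful
    intro n Wstar W _ hsub i
    have hm1 : mech k lam n W =
        ((runMech k lam W (descList ((Finset.Icc 2 k).image lam))
          Finset.univ).map Prod.snd).prod := rfl
    have hm2 : mech k lam n (Function.update W i (Wstar i)) =
        ((runMech k lam (Function.update W i (Wstar i))
          (descList ((Finset.Icc 2 k).image lam)) Finset.univ).map Prod.snd).prod := rfl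
    rw [hm1, hm2]
    exact truth_ind k lam W Wstar i hsub _ Finset.univ
      (descList_sorted _) hpos
  · -- ApproxRatio
    refine ⟨hr1, ?_⟩
    intro n Wstar _ π hπ
    have happrox := approx_ind k lam hlam hr1 hrho Wstar π hπ
      (descList ((Finset.Icc 2 k).image lam)) Finset.univ
      (π.support.image (fun x => (π.cycleOf x).support))
      (descList_sorted _) hmemvs
      (fun c hc => by
        obtain ⟨x, hx, rfl⟩ := Finset.mem_image.1 hc
        exact ⟨x, Equiv.Perm.mem_support.1 hx, rfl⟩)
      (fun c _ => Finset.subset_univ c)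
      (fun c hc => by
        obtain ⟨x, hx, rfl⟩ := Finset.mem_image.1 hc
        have hx' : π x ≠ x := Equiv.Perm.mem_support.1 hx
        apply mem_descList.2
        apply Finset.mem_image.2
        refine ⟨(π.cycleOf x).support.card, Finset.mem_Icc.2 ⟨?_, ?_⟩, rfl⟩
        · exact Equiv.Perm.two_le_card_support_cycleOf_iff.2 hx'
        · exact (hπ x hx').2)
    have hSWf : SW lam (mech k lam n Wstar) =
        ((runMech k lam Wstar (descList ((Finset.Icc 2 k).image lam))
          Finset.univ).map (fun p => p.1 * (p.2.support.card : ℝ))).sum :=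
      SW_runMech k lam Wstar _ _
    have hSWπ := SW_eq_sum_cycles lam π
    have hmain : SW lam π ≤
        max ((k : ℝ) - 1 + ε) (rho k lam) * SW lam (mech k lam n Wstar) := by
      rw [hSWπ, hSWf]
      exact happrox
    have hrpos : (0:ℝ) < max ((k : ℝ) - 1 + ε) (rho k lam) :=
      lt_of_lt_of_le one_pos hr1
    rw [ge_iff_le]
    have h2 : (1 / max ((k : ℝ) - 1 + ε) (rho k lam)) * SW lam π ≤
        (1 / max ((k : ℝ) - 1 + ε) (rho k lam)) *
          (max ((k : ℝ) - 1 + ε) (rho k lam) * SW lam (mech k lam n Wstar)) :=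
      mul_le_mul_of_nonneg_left hmain (by positivity)
    have h3 : (1 / max ((k : ℝ) - 1 + ε) (rho k lam)) *
        (max ((k : ℝ) - 1 + ε) (rho k lam) * SW lam (mech k lam n Wstar)) =
        SW lam (mech k lam n Wstar) := by
      field_simp
    linarith


end

end BarterExchange
end
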